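/- arXiv:1309.7176 — 7 statements merged into one kernel-verified Lean document; each statement's English description precedes it below -/
import Mathlib

section
/- Let T > 0, let b : ℝ → ℝ be continuously differentiable on [0, T] with b(0) = 0 and b'(t) > 0 for every t ∈ [0, T], and let g : [0, T] → ℝ be Lebesgue integrable; set a(t) = ∫_0^t g(s) ds for t ∈ [0, T]. Then the following are equivalent: (i) ∫_0^T g(t)^2 dt < ∞ and ∫_0^T g(t)^2 |g(t)| dt < ∞; (ii) there exists a measurable function z : [0, T] → ℝ such that a(t) = ∫_0^t z(s) b'(s) ds for all t ∈ [0, T], ∫_0^T z(t)^2 b'(t) dt < ∞, and ∫_0^T z(t)^2 |g(t)| dt < ∞. -/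
open MeasureTheory

/-- If an integrable function on `(0,T]` has vanishing integral on every `(0,t]`,
then it vanishes almost everywhere on `(0,T]`. -/
lemma ae_zero_of_integral_Ioc_zero (T : ℝ) (hT : 0 ≤ T) (f : ℝ → ℝ)
    (hf : IntegrableOn f (Set.Ioc 0 T) volume)
    (h : ∀ t ∈ Set.Icc 0 T, ∫ s in Set.Ioc 0 t, f s = 0) :
    ∀ᵐ t ∂(volume.restrict (Set.Ioc 0 T)), f t = 0 := by
  set μ₀ := volume.restrict (Set.Ioc 0 T) with hμ₀
  have hfi : Integrable f μ₀ := hf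
  have hmeas : AEMeasurable f μ₀ := hfi.aemeasurable
  set ν₁ := μ₀.withDensity fun t => ENNReal.ofReal (f t) with hν₁
  set ν₂ := μ₀.withDensity fun t => ENNReal.ofReal (-f t) with hν₂
  have hfin1 : IsFiniteMeasure ν₁ := isFiniteMeasure_withDensity_ofReal hfi.hasFiniteIntegral
  have hfin2 : IsFiniteMeasure ν₂ := isFiniteMeasure_withDensity_ofReal hfi.neg.hasFiniteIntegral
  have haem1 : AEMeasurable (fun t => ENNReal.ofReal (f t)) μ₀ :=
    ENNReal.measurable_ofReal.comp_aemeasurable hmeas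
  have haem2 : AEMeasurable (fun t => ENNReal.ofReal (-f t)) μ₀ :=
    ENNReal.measurable_ofReal.comp_aemeasurable hmeas.neg
  -- integrals over Iic t are zero
  have hIic : ∀ t : ℝ, ∫ s in Set.Iic t, f s ∂μ₀ = 0 := by
    intro t
    have hset : Set.Iic t ∩ Set.Ioc 0 T = Set.Ioc 0 (min t T) := by
      ext x
      simp only [Set.mem_inter_iff, Set.mem_Iic, Set.mem_Ioc, le_min_iff]
      tauto
    have hrr : μ₀.restrict (Set.Iic t) = volume.restrict (Set.Ioc 0 (min t T)) := by
      rw [hμ₀, Measure.restrict_restrict measurableSet_Iic, hset]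
    rw [show ∫ s in Set.Iic t, f s ∂μ₀ = ∫ s, f s ∂(μ₀.restrict (Set.Iic t)) from rfl, hrr]
    by_cases ht : 0 ≤ t
    · exact h (min t T) ⟨le_min ht hT, min_le_right _ _⟩
    · have : Set.Ioc 0 (min t T) = ∅ := by
        apply Set.Ioc_eq_empty
        push_neg at ht ⊢
        exact le_of_lt (lt_of_le_of_lt (min_le_left _ _) ht)
      rw [this]
      simp
  -- the two densities define the same measure
  have hext : ν₁ = ν₂ := by
    refine Measure.ext_of_Iic ν₁ ν₂ fun t => ?_
    have hres : Integrable f (μ₀.restrict (Set.Iic t)) := hfi.restrict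
    have hkey := integral_eq_lintegral_pos_part_sub_lintegral_neg_part hres
    rw [hIic t] at hkey
    have h1 : ν₁ (Set.Iic t) = ∫⁻ s in Set.Iic t, ENNReal.ofReal (f s) ∂μ₀ :=
      withDensity_apply _ measurableSet_Iic
    have h2 : ν₂ (Set.Iic t) = ∫⁻ s in Set.Iic t, ENNReal.ofReal (-f s) ∂μ₀ :=
      withDensity_apply _ measurableSet_Iic
    have hfin1' : ν₁ (Set.Iic t) ≠ ⊤ := measure_ne_top ν₁ _
    have hfin2' : ν₂ (Set.Iic t) ≠ ⊤ := measure_ne_top ν₂ _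
    rw [h1, h2]
    rw [h1] at hfin1'; rw [h2] at hfin2'
    have := sub_eq_zero.mp hkey.symm
    exact (ENNReal.toReal_eq_toReal_iff' hfin1' hfin2').mp this
  -- conclude
  have hae : (fun t => ENNReal.ofReal (f t)) =ᵐ[μ₀] fun t => ENNReal.ofReal (-f t) :=
    (withDensity_eq_iff_of_sigmaFinite haem1 haem2).mp hext
  filter_upwards [hae] with t ht
  by_contra hne
  rcases lt_or_gt_of_ne hne with hlt | hgt
  · have h1 : ENNReal.ofReal (f t) = 0 := ENNReal.ofReal_eq_zero.mpr hlt.le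
    have h2 : ENNReal.ofReal (-f t) ≠ 0 := by
      simp only [ne_eq, ENNReal.ofReal_eq_zero, not_le]
      linarith
    exact h2 (ht.symm.trans h1)
  · have h1 : ENNReal.ofReal (-f t) = 0 := ENNReal.ofReal_eq_zero.mpr (by linarith)
    have h2 : ENNReal.ofReal (f t) ≠ 0 := by
      simp only [ne_eq, ENNReal.ofReal_eq_zero, not_le]
      linarith
    exact h2 (ht.trans h1)

/-- Lemma 2.1: for `a(t) = ∫_0^t g(s) ds` with `g` integrable, and `b` continuously
differentiable with positive derivative `b'` on `[0,T]`, the conditions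
`∫_0^T g² dt < ∞` and `∫_0^T g² |g| dt < ∞` hold if and only if `a` lies in the
Cameron–Martin like subspace, i.e. `a(t) = ∫_0^t z(s) b'(s) ds` with
`∫_0^T z² b' dt < ∞` and `∫_0^T z² |g| dt < ∞`. -/
theorem stmt1 (T : ℝ) (hT : 0 < T) (b b' : ℝ → ℝ)
    (hb'cont : ContinuousOn b' (Set.Icc 0 T))
    (hbderiv : ∀ t ∈ Set.Icc 0 T, HasDerivAt b (b' t) t)
    (hb0 : b 0 = 0)
    (hb'pos : ∀ t ∈ Set.Icc 0 T, 0 < b' t)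
    (g : ℝ → ℝ) (hg : IntegrableOn g (Set.Icc 0 T) volume)
    (a : ℝ → ℝ)
    (ha : ∀ t ∈ Set.Icc 0 T, a t = ∫ s in Set.Ioc 0 t, g s) :
    (IntegrableOn (fun t => g t ^ 2) (Set.Ioc 0 T) volume ∧
      IntegrableOn (fun t => g t ^ 2 * |g t|) (Set.Ioc 0 T) volume)
    ↔
    (∃ z : ℝ → ℝ, Measurable z ∧
      (∀ t ∈ Set.Icc 0 T, a t = ∫ s in Set.Ioc 0 t, z s * b' s) ∧
      IntegrableOn (fun t => z t ^ 2 * b' t) (Set.Ioc 0 T) volume ∧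
      IntegrableOn (fun t => z t ^ 2 * |g t|) (Set.Ioc 0 T) volume) := by
  have hIccne : (Set.Icc (0:ℝ) T).Nonempty := Set.nonempty_Icc.mpr hT.le
  obtain ⟨x₀, hx₀, hmin⟩ := isCompact_Icc.exists_isMinOn hIccne hb'cont
  obtain ⟨x₁, hx₁, hmax⟩ := isCompact_Icc.exists_isMaxOn hIccne hb'cont
  set m := b' x₀ with hm_def
  set M := b' x₁ with hM_def
  have hm_pos : 0 < m := hb'pos x₀ hx₀
  have hM_pos : 0 < M := hb'pos x₁ hx₁
  have hm_le : ∀ t ∈ Set.Icc 0 T, m ≤ b' t := fun t ht => hmin ht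
  have hM_ge : ∀ t ∈ Set.Icc 0 T, b' t ≤ M := fun t ht => hmax ht
  have hsubI : Set.Ioc (0:ℝ) T ⊆ Set.Icc 0 T := Set.Ioc_subset_Icc_self
  have hb'aeI : AEMeasurable b' (volume.restrict (Set.Icc 0 T)) :=
    hb'cont.aemeasurable measurableSet_Icc
  have hb'ae : AEMeasurable b' (volume.restrict (Set.Ioc 0 T)) :=
    hb'aeI.mono_measure (Measure.restrict_mono hsubI le_rfl)
  have hgaeI : AEMeasurable g (volume.restrict (Set.Icc 0 T)) := hg.aemeasurable
  have hgae : AEMeasurable g (volume.restrict (Set.Ioc 0 T)) :=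
    hgaeI.mono_measure (Measure.restrict_mono hsubI le_rfl)
  have hb'int : IntegrableOn b' (Set.Icc 0 T) volume :=
    hb'cont.integrableOn_Icc
  constructor
  · rintro ⟨h1, h2⟩
    have hwa : AEMeasurable (fun t => g t / b' t) (volume.restrict (Set.Icc 0 T)) :=
      hgaeI.div hb'aeI
    set z := hwa.mk _ with hz_def
    have hzw : z =ᵐ[volume.restrict (Set.Icc 0 T)] fun t => g t / b' t :=
      hwa.ae_eq_mk.symm
    have hzg : ∀ᵐ t ∂(volume.restrict (Set.Icc 0 T)),
        z t * b' t = g t ∧ z t = g t / b' t ∧ t ∈ Set.Icc 0 T := by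
      filter_upwards [hzw, ae_restrict_mem measurableSet_Icc] with t h1 h2
      refine ⟨?_, h1, h2⟩
      rw [h1]
      exact div_mul_cancel₀ _ (hb'pos t h2).ne'
    have hzgIoc := ae_restrict_of_ae_restrict_of_subset hsubI hzg
    refine ⟨z, hwa.measurable_mk, ?_, ?_, ?_⟩
    · intro t ht
      rw [ha t ht]
      refine (integral_congr_ae ?_).symm
      have hsub : Set.Ioc (0:ℝ) t ⊆ Set.Icc 0 T :=
        Set.Ioc_subset_Icc_self.trans (Set.Icc_subset_Icc_right ht.2)
      filter_upwards [ae_restrict_of_ae_restrict_of_subset hsub hzg] with s hs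
      exact hs.1
    · refine Integrable.mono' (h1.const_mul (1/m))
        (((hwa.measurable_mk.aemeasurable.pow_const 2).mul hb'ae).aestronglyMeasurable) ?_
      filter_upwards [hzgIoc] with t ht
      obtain ⟨hzb, hz, htmem⟩ := ht
      have hbpos := hb'pos t htmem
      have hble := hm_le t htmem
      rw [Real.norm_eq_abs, hz, abs_of_nonneg (by positivity)]
      have key : (g t / b' t) ^ 2 * b' t = g t ^ 2 / b' t := by
        field_simp
      rw [key]
      calc g t ^ 2 / b' t ≤ g t ^ 2 / m :=
            div_le_div_of_nonneg_left (sq_nonneg (g t)) hm_pos hble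
        _ = 1 / m * g t ^ 2 := by ring
    · refine Integrable.mono' (h2.const_mul (1/m^2))
        (((hwa.measurable_mk.aemeasurable.pow_const 2).mul
          (continuous_abs.measurable.comp_aemeasurable hgae)).aestronglyMeasurable) ?_
      filter_upwards [hzgIoc] with t ht
      obtain ⟨hzb, hz, htmem⟩ := ht
      have hbpos := hb'pos t htmem
      have hble := hm_le t htmem
      rw [Real.norm_eq_abs, hz, abs_of_nonneg (by positivity)]
      have key : (g t / b' t) ^ 2 * |g t| = g t ^ 2 * |g t| / b' t ^ 2 := by
        field_simp
      have hb2 : m ^ 2 ≤ b' t ^ 2 := by nlinarith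
      rw [key]
      calc g t ^ 2 * |g t| / b' t ^ 2 ≤ g t ^ 2 * |g t| / m ^ 2 :=
            div_le_div_of_nonneg_left (by positivity) (by positivity) hb2
        _ = 1 / m ^ 2 * (g t ^ 2 * |g t|) := by ring
  · rintro ⟨z, hzm, hza, hzb, hzg⟩
    -- z * b' is integrable on (0,T]
    have hzb'int : IntegrableOn (fun t => z t * b' t) (Set.Ioc 0 T) volume := by
      refine Integrable.mono' (hzb.add (hb'int.mono_set hsubI))
        ((hzm.aemeasurable.mul hb'ae).aestronglyMeasurable) ?_
      filter_upwards [ae_restrict_mem measurableSet_Ioc] with t htmem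
      have hbpos := hb'pos t (hsubI htmem)
      simp only [Pi.add_apply]
      rw [Real.norm_eq_abs, abs_mul, abs_of_nonneg hbpos.le]
      have hX : (0:ℝ) ≤ (z t ^ 2 + 1 - 2 * |z t|) * b' t := by
        apply mul_nonneg _ hbpos.le
        nlinarith [sq_nonneg (|z t| - 1), sq_abs (z t)]
      nlinarith [mul_nonneg (sq_nonneg (z t)) hbpos.le, hbpos.le]
    -- g = z * b' a.e. on (0,T]
    have hdiff : ∀ᵐ t ∂(volume.restrict (Set.Ioc 0 T)), z t * b' t - g t = 0 := by
      refine ae_zero_of_integral_Ioc_zero T hT.le _ (hzb'int.sub (hg.mono_set hsubI)) ?_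
      intro t ht
      have hsub : Set.Ioc (0:ℝ) t ⊆ Set.Icc 0 T :=
        Set.Ioc_subset_Icc_self.trans (Set.Icc_subset_Icc_right ht.2)
      have hsub' : Set.Ioc (0:ℝ) t ⊆ Set.Ioc 0 T := Set.Ioc_subset_Ioc_right ht.2
      rw [integral_sub (hzb'int.mono_set hsub') (hg.mono_set hsub), ← hza t ht, ← ha t ht,
        sub_self]
    have hgeq : ∀ᵐ t ∂(volume.restrict (Set.Ioc 0 T)), g t = z t * b' t := by
      filter_upwards [hdiff] with t ht
      linarith
    constructor
    · refine Integrable.mono' (hzb.const_mul M)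
        ((hgae.pow_const 2).aestronglyMeasurable) ?_
      filter_upwards [hgeq, ae_restrict_mem measurableSet_Ioc] with t hge htmem
      have hbpos := hb'pos t (hsubI htmem)
      have hble := hM_ge t (hsubI htmem)
      rw [Real.norm_eq_abs, abs_of_nonneg (sq_nonneg _), hge]
      nlinarith [mul_nonneg (mul_nonneg (sq_nonneg (z t)) hbpos.le)
        (sub_nonneg.mpr hble), sq_nonneg (z t), mul_nonneg (sq_nonneg (z t)) hbpos.le]
    · refine Integrable.mono' (hzg.const_mul (M^2))
        (((hgae.pow_const 2).mul
          (continuous_abs.measurable.comp_aemeasurable hgae)).aestronglyMeasurable) ?_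
      filter_upwards [hgeq, ae_restrict_mem measurableSet_Ioc] with t hge htmem
      have hbpos := hb'pos t (hsubI htmem)
      have hble := hM_ge t (hsubI htmem)
      rw [Real.norm_eq_abs, abs_of_nonneg (by positivity)]
      have hg2 : g t ^ 2 ≤ M ^ 2 * z t ^ 2 := by
        rw [hge]
        nlinarith [mul_nonneg (mul_nonneg (sq_nonneg (z t)) hbpos.le)
          (sub_nonneg.mpr hble), sq_nonneg (z t), mul_nonneg (sq_nonneg (z t)) hbpos.le]
      nlinarith [mul_le_mul_of_nonneg_right hg2 (abs_nonneg (g t))]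
end

section
/- Let H be a separable real Hilbert space, let B₁ and B₂ be bounded linear operators on H, let a, w ∈ H, and for j = 1, 2 let λⱼ = αⱼ + iβⱼ be complex numbers with αⱼ ≥ 0 and βⱼ ≠ 0. Then |ψ(λ₁, λ₂; w)| = exp( ∑_{j=1}^{2} ( −(αⱼ/(2(αⱼ² + βⱼ²))) · ‖Bⱼ w‖² + (βⱼ/|βⱼ|) · √((√(αⱼ² + βⱼ²) − αⱼ)/(2(αⱼ² + βⱼ²))) · ⟨Bⱼ w, a⟩ ) ). -/
open scoped RealInnerProductSpace


lemma re_aux (α β c d x y r : ℝ) (hr : r ≠ 0) :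
    (-(c : ℂ) ^ 2 / (2 * ((α : ℂ) + (β : ℂ) * Complex.I))
      + Complex.I * (((x / r : ℝ) : ℂ) - ((y / r : ℝ) : ℂ) * Complex.I) * (d : ℂ)).re
    = -c ^ 2 * (2 * α) / (4 * (α ^ 2 + β ^ 2)) + y / r * d := by
  simp [Complex.add_re, Complex.div_re, Complex.normSq_apply, Complex.mul_re, Complex.mul_im,
    ← Complex.ofReal_pow]
  field_simp
  ring

set_option maxHeartbeats 1600000 in
lemma key_re (α β c d : ℝ) (hα : 0 ≤ α) (hβ : β ≠ 0) :
    (-(c : ℂ) ^ 2 / (2 * ((α : ℂ) + (β : ℂ) * Complex.I))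
      + Complex.I * ((α : ℂ) + (β : ℂ) * Complex.I) ^ (-(1 : ℂ) / 2) * (d : ℂ)).re
    = -(α / (2 * (α ^ 2 + β ^ 2))) * c ^ 2
      + (β / |β|) * Real.sqrt ((Real.sqrt (α ^ 2 + β ^ 2) - α) / (2 * (α ^ 2 + β ^ 2))) * d := by
  have hne : α ^ 2 + β ^ 2 ≠ 0 := by positivity
  set r := Real.sqrt (α ^ 2 + β ^ 2) with hrdef
  have hβ2 : 0 < β ^ 2 := by positivity
  have hr2 : r ^ 2 = α ^ 2 + β ^ 2 := Real.sq_sqrt (by positivity)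
  have hrpos : 0 < r := Real.sqrt_pos.2 (by positivity)
  have hrα : α < r := by nlinarith
  set x := Real.sqrt ((r + α) / 2) with hxdef
  set y := (β / |β|) * Real.sqrt ((r - α) / 2) with hydef
  have hsq : (β / |β|) ^ 2 = 1 := by
    rw [div_pow, sq_abs]; field_simp
  have hx2 : x ^ 2 = (r + α) / 2 := Real.sq_sqrt (by linarith)
  have hy2 : y ^ 2 = (r - α) / 2 := by
    rw [hydef, mul_pow, hsq, one_mul]
    exact Real.sq_sqrt (by linarith)
  have hxpos : 0 < x := Real.sqrt_pos.2 (by linarith)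
  have hxy : 2 * x * y = β := by
    have h1 : Real.sqrt ((r + α) / 2) * Real.sqrt ((r - α) / 2)
        = Real.sqrt (((r + α) / 2) * ((r - α) / 2)) :=
      (Real.sqrt_mul (by linarith) _).symm
    have h2 : ((r + α) / 2) * ((r - α) / 2) = (|β| / 2) ^ 2 := by
      rw [div_pow, sq_abs]; nlinarith
    have h3 : Real.sqrt ((|β| / 2) ^ 2) = |β| / 2 := Real.sqrt_sq (by positivity)
    rw [hxdef, hydef]
    rw [show 2 * Real.sqrt ((r + α) / 2) * (β / |β| * Real.sqrt ((r - α) / 2))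
        = 2 * (β / |β|) * (Real.sqrt ((r + α) / 2) * Real.sqrt ((r - α) / 2)) by ring,
      h1, h2, h3]
    field_simp
  set z : ℂ := (x : ℂ) + (y : ℂ) * Complex.I with hzdef
  have hzre : z.re = x := by simp [hzdef]
  have hzim : z.im = y := by simp [hzdef]
  have hz2 : z ^ 2 = (α : ℂ) + (β : ℂ) * Complex.I := by
    apply Complex.ext <;>
      simp [hzdef, pow_two, Complex.mul_re, Complex.mul_im] <;> nlinarith
  have harg : -(Real.pi / 2) < z.arg ∧ z.arg ≤ Real.pi / 2 := by
    have h := Complex.abs_arg_lt_pi_div_two_iff.2 (Or.inl (by rw [hzre]; exact hxpos))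
    rw [abs_lt] at h
    exact ⟨h.1, h.2.le⟩
  have hpow : ((α : ℂ) + (β : ℂ) * Complex.I) ^ ((2 : ℕ) : ℂ)⁻¹ = z := by
    rw [← hz2]
    have := Complex.pow_cpow_nat_inv (x := z) (n := 2) (by norm_num)
      (by push_cast; linarith [harg.1]) (by push_cast; linarith [harg.2])
    simpa using this
  have hnormSq : Complex.normSq z = r := by
    simp only [Complex.normSq_apply, hzre, hzim]
    nlinarith
  have hinv : ((α : ℂ) + (β : ℂ) * Complex.I) ^ (-(1 : ℂ) / 2)
      = ((x / r : ℝ) : ℂ) - ((y / r : ℝ) : ℂ) * Complex.I := by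
    rw [show (-(1 : ℂ) / 2) = -(((2 : ℕ) : ℂ)⁻¹) by norm_num, Complex.cpow_neg, hpow,
      Complex.inv_def, hnormSq]
    apply Complex.ext <;> simp [hzre, hzim, div_eq_mul_inv]
  rw [hinv, re_aux α β c d x y r hrpos.ne']
  have hy' : y / r = (β / |β|) * Real.sqrt ((r - α) / (2 * (α ^ 2 + β ^ 2))) := by
    rw [← hr2, hydef]
    have : (r - α) / (2 * r ^ 2) = ((r - α) / 2) / r ^ 2 := by ring
    rw [this, Real.sqrt_div (show (0:ℝ) ≤ (r - α) / 2 by linarith), Real.sqrt_sq hrpos.le]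
    ring
  rw [hy']
  have h1 : -c ^ 2 * (2 * α) / (4 * (α ^ 2 + β ^ 2)) = -(α / (2 * (α ^ 2 + β ^ 2))) * c ^ 2 := by
    field_simp
    ring
  rw [h1]

/-- Equation (3.9): exact modulus of
`ψ(l₁, l₂; w) = exp(∑_{j=1,2} (−‖Bⱼw‖²/(2λⱼ) + i λⱼ^{−1/2} ⟨Bⱼw, a⟩))`
for `λⱼ = αⱼ + iβⱼ` with `αⱼ ≥ 0`, `βⱼ ≠ 0`. -/
theorem stmt6 {H : Type*} [NormedAddCommGroup H] [InnerProductSpace ℝ H]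
    [TopologicalSpace.SeparableSpace H]
    (B₁ B₂ : H →L[ℝ] H) (a w : H)
    (α₁ β₁ α₂ β₂ : ℝ) (hα₁ : 0 ≤ α₁) (hβ₁ : β₁ ≠ 0) (hα₂ : 0 ≤ α₂) (hβ₂ : β₂ ≠ 0)
    (l₁ l₂ : ℂ) (h₁ : l₁ = (α₁ : ℂ) + (β₁ : ℂ) * Complex.I)
    (h₂ : l₂ = (α₂ : ℂ) + (β₂ : ℂ) * Complex.I) :
    ‖(Complex.exp
        ((-((‖B₁ w‖ : ℂ) ^ 2) / (2 * l₁)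
            + Complex.I * l₁ ^ (-(1 : ℂ) / 2) * ((⟪B₁ w, a⟫ : ℝ) : ℂ))
          + (-((‖B₂ w‖ : ℂ) ^ 2) / (2 * l₂)
            + Complex.I * l₂ ^ (-(1 : ℂ) / 2) * ((⟪B₂ w, a⟫ : ℝ) : ℂ))))‖
    = Real.exp
        ((-(α₁ / (2 * (α₁ ^ 2 + β₁ ^ 2))) * ‖B₁ w‖ ^ 2
            + (β₁ / |β₁|)
              * Real.sqrt ((Real.sqrt (α₁ ^ 2 + β₁ ^ 2) - α₁) / (2 * (α₁ ^ 2 + β₁ ^ 2)))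
              * ⟪B₁ w, a⟫)
          + (-(α₂ / (2 * (α₂ ^ 2 + β₂ ^ 2))) * ‖B₂ w‖ ^ 2
            + (β₂ / |β₂|)
              * Real.sqrt ((Real.sqrt (α₂ ^ 2 + β₂ ^ 2) - α₂) / (2 * (α₂ ^ 2 + β₂ ^ 2)))
              * ⟪B₂ w, a⟫)) := by
  subst h₁ h₂
  rw [Complex.norm_exp, Complex.add_re,
    key_re α₁ β₁ (‖B₁ w‖) (⟪B₁ w, a⟫) hα₁ hβ₁,
    key_re α₂ β₂ (‖B₂ w‖) (⟪B₂ w, a⟫) hα₂ hβ₂]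
end

section
/- Let n ≥ 1 be a natural number, let λ ∈ ℂ with Re(λ) > 0, and let m₁, …, m_{n+1} and c₁, …, c_{n+1} be real numbers. Then the function u = (u₁, …, u_{n+1}) ↦ exp( ((1 − λ)/2) ∑_{k=1}^{n} u_k² + (λ^{1/2} − 1) ∑_{k=1}^{n} m_k u_k + i ∑_{k=1}^{n+1} c_k u_k − ∑_{k=1}^{n+1} (u_k − m_k)²/2 ) is Lebesgue integrable on ℝ^{n+1} and ∫_{ℝ^{n+1}} exp( ((1 − λ)/2) ∑_{k=1}^{n} u_k² + (λ^{1/2} − 1) ∑_{k=1}^{n} m_k u_k + i ∑_{k=1}^{n+1} c_k u_k − ∑_{k=1}^{n+1} (u_k − m_k)²/2 ) du = (2π)^{(n+1)/2} · λ^{−n/2} · exp( ((λ − 1)/(2λ)) ∑_{k=1}^{n} c_k² − (1/2) ∑_{k=1}^{n+1} c_k² + i λ^{−1/2} ∑_{k=1}^{n} m_k c_k + i m_{n+1} c_{n+1} ). -/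
open MeasureTheory Complex

lemma aux_mul_cpow (r : ℝ) (hr : 0 < r) (z : ℂ) (hz : z ≠ 0) (w : ℂ) :
    ((r : ℂ) * z) ^ w = (r : ℂ) ^ w * z ^ w := by
  have hr0 : (r : ℂ) ≠ 0 := ofReal_ne_zero.2 hr.ne'
  rw [cpow_def_of_ne_zero (mul_ne_zero hr0 hz), cpow_def_of_ne_zero hr0,
    cpow_def_of_ne_zero hz, Complex.log_ofReal_mul hr hz, ← Complex.exp_add,
    ← Complex.ofReal_log hr.le]
  ring_nf

/-- Lemma 4.1 of the paper as an explicit Gaussian integral over `ℝ^{n+1}`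
(coordinates indexed by `Fin (n+1)`, with the paper's indices `1,…,n`
corresponding to `Fin.castSucc k`, `k : Fin n`, and index `n+1` to `Fin.last n`). -/
theorem stmt9 (n : ℕ) (hn : 1 ≤ n) (lam : ℂ) (hlam : 0 < lam.re)
    (m c : Fin (n + 1) → ℝ) :
    Integrable (fun u : Fin (n + 1) → ℝ =>
      Complex.exp
        (((1 - lam) / 2) * ∑ k : Fin n, ((u k.castSucc : ℝ) : ℂ) ^ 2
          + (lam ^ ((1 : ℂ) / 2) - 1)
              * ∑ k : Fin n, ((m k.castSucc * u k.castSucc : ℝ) : ℂ)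
          + Complex.I * ∑ k : Fin (n + 1), ((c k * u k : ℝ) : ℂ)
          - ∑ k : Fin (n + 1), ((u k - m k : ℝ) : ℂ) ^ 2 / 2)) volume ∧
    ∫ u : Fin (n + 1) → ℝ,
        Complex.exp
          (((1 - lam) / 2) * ∑ k : Fin n, ((u k.castSucc : ℝ) : ℂ) ^ 2
            + (lam ^ ((1 : ℂ) / 2) - 1)
                * ∑ k : Fin n, ((m k.castSucc * u k.castSucc : ℝ) : ℂ)
            + Complex.I * ∑ k : Fin (n + 1), ((c k * u k : ℝ) : ℂ)
            - ∑ k : Fin (n + 1), ((u k - m k : ℝ) : ℂ) ^ 2 / 2)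
      = (((2 * Real.pi) ^ (((n : ℝ) + 1) / 2) : ℝ) : ℂ)
          * lam ^ (-(n : ℂ) / 2)
          * Complex.exp
              (((lam - 1) / (2 * lam)) * ∑ k : Fin n, ((c k.castSucc : ℝ) : ℂ) ^ 2
                - (1 / 2) * ∑ k : Fin (n + 1), ((c k : ℝ) : ℂ) ^ 2
                + Complex.I * lam ^ (-(1 : ℂ) / 2)
                    * ∑ k : Fin n, ((m k.castSucc * c k.castSucc : ℝ) : ℂ)
                + Complex.I * ((m (Fin.last n) : ℝ) : ℂ) * ((c (Fin.last n) : ℝ) : ℂ)) := by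
  have hl0 : lam ≠ 0 := fun h => by simp [h] at hlam
  set s : ℂ := lam ^ ((1 : ℂ) / 2) with hs_def
  have hs2 : s ^ 2 = lam := by
    rw [hs_def, ← Complex.cpow_nat_mul]
    norm_num
  have hs0 : s ≠ 0 := by
    intro h
    rw [h] at hs2
    simp at hs2
    exact hl0 hs2.symm
  have hargpi : lam.arg ≠ Real.pi := by
    intro h
    have h2 := Complex.arg_eq_pi_iff.mp h
    linarith [h2.1]
  have hneg : lam ^ (-(1 : ℂ) / 2) = s / lam := by
    rw [show (-(1 : ℂ) / 2) = -((1 : ℂ) / 2) by ring, Complex.cpow_neg, ← hs_def, ← hs2]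
    field_simp [pow_two]
  set b : Fin (n + 1) → ℂ := fun k => Fin.lastCases 2⁻¹ (fun _ => lam / 2) k with hb_def
  set P : Fin (n + 1) → ℂ := fun k =>
    Fin.lastCases ((m (Fin.last n) : ℂ) + Complex.I * (c (Fin.last n) : ℂ))
      (fun j => s * (m j.castSucc : ℂ) + Complex.I * (c j.castSucc : ℂ)) k with hP_def
  set D : Fin (n + 1) → ℂ := fun k => -((m k : ℝ) : ℂ) ^ 2 / 2 with hD_def
  have hbre : ∀ k, 0 < (b k).re := by
    intro k
    induction k using Fin.lastCases with
    | last => norm_num [hb_def]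
    | cast j =>
      simp only [hb_def, Fin.lastCases_castSucc]
      rw [Complex.div_re]
      simp [Complex.normSq]
      positivity
  have hfun : (fun u : Fin (n + 1) → ℝ =>
      Complex.exp
        (((1 - lam) / 2) * ∑ k : Fin n, ((u k.castSucc : ℝ) : ℂ) ^ 2
          + (s - 1) * ∑ k : Fin n, ((m k.castSucc * u k.castSucc : ℝ) : ℂ)
          + Complex.I * ∑ k : Fin (n + 1), ((c k * u k : ℝ) : ℂ)
          - ∑ k : Fin (n + 1), ((u k - m k : ℝ) : ℂ) ^ 2 / 2)) =
      fun u => ∏ k : Fin (n + 1),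
        Complex.exp (-(b k) * ((u k : ℝ) : ℂ) ^ 2 + P k * ((u k : ℝ) : ℂ) + D k) := by
    funext u
    rw [← Complex.exp_sum]
    congr 1
    simp only [hb_def, hP_def, hD_def, Fin.sum_univ_castSucc,
      Fin.lastCases_castSucc, Fin.lastCases_last]
    push_cast
    rw [Finset.sum_congr rfl (fun (k : Fin n) _ =>
      show -(lam / 2) * ((u k.castSucc : ℝ) : ℂ) ^ 2
          + (s * (m k.castSucc : ℂ) + Complex.I * (c k.castSucc : ℂ)) * ((u k.castSucc : ℝ) : ℂ)
          + -((m k.castSucc : ℝ) : ℂ) ^ 2 / 2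
        = (1 - lam) / 2 * ((u k.castSucc : ℝ) : ℂ) ^ 2
          + (s - 1) * (((m k.castSucc : ℝ) : ℂ) * ((u k.castSucc : ℝ) : ℂ))
          + Complex.I * (((c k.castSucc : ℝ) : ℂ) * ((u k.castSucc : ℝ) : ℂ))
          - (((u k.castSucc : ℝ) : ℂ) - ((m k.castSucc : ℝ) : ℂ)) ^ 2 / 2 from by ring)]
    simp only [Finset.sum_add_distrib, Finset.sum_sub_distrib, ← Finset.mul_sum,
      ← Finset.sum_div]
    ring
  have hint : ∀ k, Integrable (fun x : ℝ =>
      Complex.exp (-(b k) * ((x : ℝ) : ℂ) ^ 2 + P k * ((x : ℝ) : ℂ) + D k)) :=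
    fun k => integrable_cexp_quadratic (hbre k) _ _
  constructor
  · rw [hfun]
    exact Integrable.fintype_prod
      (f := fun k (x : ℝ) =>
        Complex.exp (-(b k) * ((x : ℝ) : ℂ) ^ 2 + P k * ((x : ℝ) : ℂ) + D k)) hint
  · rw [hfun, integral_fintype_prod_volume_eq_prod
      (f := fun k (x : ℝ) =>
        Complex.exp (-(b k) * ((x : ℝ) : ℂ) ^ 2 + P k * ((x : ℝ) : ℂ) + D k))]
    have hI1 : ∀ k, (∫ x : ℝ,
        Complex.exp (-(b k) * ((x : ℝ) : ℂ) ^ 2 + P k * ((x : ℝ) : ℂ) + D k))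
        = (↑Real.pi / b k) ^ ((1 : ℂ) / 2)
            * Complex.exp (D k + P k ^ 2 / (4 * b k)) := by
      intro k
      have hk : (-(b k)).re < 0 := by simpa using hbre k
      rw [integral_cexp_quadratic hk, neg_neg]
      congr 1
      rw [mul_neg, div_neg, sub_neg_eq_add]
    rw [Finset.prod_congr rfl (fun k _ => hI1 k), Finset.prod_mul_distrib,
      ← Complex.exp_sum]
    have hpref : (∏ k : Fin (n + 1), (↑Real.pi / b k) ^ ((1 : ℂ) / 2))
        = (((2 * Real.pi) ^ (((n : ℝ) + 1) / 2) : ℝ) : ℂ) * lam ^ (-(n : ℂ) / 2) := by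
      have h2pi : (0 : ℝ) < 2 * Real.pi := by positivity
      have hfac : ((Real.pi : ℂ) / (lam / 2)) = ((2 * Real.pi : ℝ) : ℂ) * lam⁻¹ := by
        push_cast
        field_simp
      have hlast : ((Real.pi : ℂ) / (2⁻¹ : ℂ)) = ((2 * Real.pi : ℝ) : ℂ) := by
        push_cast
        ring
      rw [Fin.prod_univ_castSucc]
      simp only [hb_def, Fin.lastCases_castSucc, Fin.lastCases_last]
      rw [Finset.prod_const, Finset.card_univ, Fintype.card_fin, hfac, hlast,
        aux_mul_cpow _ h2pi _ (inv_ne_zero hl0) _, Complex.inv_cpow _ _ hargpi, ← hs_def,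
        Complex.ofReal_cpow h2pi.le,
        show ((((n : ℝ) + 1) / 2 : ℝ) : ℂ) = ((n + 1 : ℕ) : ℂ) * ((1 : ℂ) / 2) by
          push_cast; ring,
        Complex.cpow_nat_mul,
        show (-(n : ℂ) / 2) = ((n : ℕ) : ℂ) * (-((1 : ℂ) / 2)) by push_cast; ring,
        Complex.cpow_nat_mul, Complex.cpow_neg, ← hs_def, mul_pow]
      ring
    have hexp : (∑ k : Fin (n + 1), (D k + P k ^ 2 / (4 * b k)))
        = ((lam - 1) / (2 * lam)) * ∑ k : Fin n, ((c k.castSucc : ℝ) : ℂ) ^ 2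
            - (1 / 2) * ∑ k : Fin (n + 1), ((c k : ℝ) : ℂ) ^ 2
            + Complex.I * (s / lam)
                * ∑ k : Fin n, ((m k.castSucc * c k.castSucc : ℝ) : ℂ)
            + Complex.I * ((m (Fin.last n) : ℝ) : ℂ) * ((c (Fin.last n) : ℝ) : ℂ) := by
      simp only [hb_def, hP_def, hD_def, Fin.sum_univ_castSucc,
        Fin.lastCases_castSucc, Fin.lastCases_last]
      push_cast
      rw [Finset.sum_congr rfl (fun (k : Fin n) _ =>
        show -((m k.castSucc : ℝ) : ℂ) ^ 2 / 2
            + (s * (m k.castSucc : ℂ) + Complex.I * (c k.castSucc : ℂ)) ^ 2 / (4 * (lam / 2))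
          = ((lam - 1) / (2 * lam) - 1 / 2) * ((c k.castSucc : ℝ) : ℂ) ^ 2
            + (Complex.I * (s / lam)) * (((m k.castSucc : ℝ) : ℂ) * ((c k.castSucc : ℝ) : ℂ))
          from by
            have key : (s * (m k.castSucc : ℂ) + Complex.I * (c k.castSucc : ℂ)) ^ 2
                = lam * ((m k.castSucc : ℝ) : ℂ) ^ 2
                  + 2 * Complex.I * s * (((m k.castSucc : ℝ) : ℂ) * ((c k.castSucc : ℝ) : ℂ))
                  - ((c k.castSucc : ℝ) : ℂ) ^ 2 := by
              rw [← hs2]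
              linear_combination ((c k.castSucc : ℝ) : ℂ) ^ 2 * Complex.I_sq
            rw [key]
            field_simp
            ring)]
      have hlastterm : -((m (Fin.last n) : ℝ) : ℂ) ^ 2 / 2
          + (((m (Fin.last n) : ℝ) : ℂ) + Complex.I * ((c (Fin.last n) : ℝ) : ℂ)) ^ 2
              / (4 * (2⁻¹ : ℂ))
          = -(1 / 2) * ((c (Fin.last n) : ℝ) : ℂ) ^ 2
            + Complex.I * (((m (Fin.last n) : ℝ) : ℂ) * ((c (Fin.last n) : ℝ) : ℂ)) := by
        have key : (((m (Fin.last n) : ℝ) : ℂ) + Complex.I * ((c (Fin.last n) : ℝ) : ℂ)) ^ 2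
            = ((m (Fin.last n) : ℝ) : ℂ) ^ 2
              + 2 * Complex.I * (((m (Fin.last n) : ℝ) : ℂ) * ((c (Fin.last n) : ℝ) : ℂ))
              - ((c (Fin.last n) : ℝ) : ℂ) ^ 2 := by
          linear_combination (((c (Fin.last n) : ℝ) : ℂ)) ^ 2 * Complex.I_sq
        rw [key]
        field_simp
        ring
      rw [hlastterm]
      simp only [Finset.sum_add_distrib, Finset.sum_sub_distrib, ← Finset.mul_sum]
      ring
    rw [hpref, hneg]
    congr 1
    rw [hexp]
end

section
/- Let H be a separable real Hilbert space, B₁ and B₂ bounded linear operators on H, a ∈ H, q₀ > 0, μ a finite Borel measure on H, ρ : H → ℂ Borel measurable with ∫_H k(q₀; w) |ρ(w)| dμ(w) < ∞, and φ : H → ℂ Borel measurable with |φ(w)| ≤ 1 for all w. Let U_{q₀} = { λ ∈ ℂ : Re(λ) > 0 and |Im(λ^{−1/2})| < 1/√(2q₀) }. Then for every (λ₁, λ₂) ∈ U_{q₀} × U_{q₀} the function w ↦ φ(w) ψ(λ₁, λ₂; w) ρ(w) is μ-integrable, and the function T(λ₁, λ₂) = ∫_H φ(w) ψ(λ₁,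 λ₂; w) ρ(w) dμ(w) is analytic in each variable on U_{q₀}: for each fixed λ₂ ∈ U_{q₀} the map λ₁ ↦ T(λ₁, λ₂) is complex differentiable at every point of U_{q₀}, and symmetrically for each fixed λ₁ ∈ U_{q₀} the map λ₂ ↦ T(λ₁, λ₂) is complex differentiable at every point of U_{q₀}. -/
open MeasureTheory
open scoped RealInnerProductSpace

/-- The function `ψ(λ₁, λ₂; w)` of equation (3.8) of the paper, with `Bⱼ` playing
the role of `Aⱼ^{1/2}`. -/
noncomputable def psi {H : Type*} [NormedAddCommGroup H] [InnerProductSpace ℝ H]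
    (B₁ B₂ : H →L[ℝ] H) (a : H) (l₁ l₂ : ℂ) (w : H) : ℂ :=
  Complex.exp
    ((-((‖B₁ w‖ : ℂ) ^ 2) / (2 * l₁)
        + Complex.I * l₁ ^ (-(1 : ℂ) / 2) * ((⟪B₁ w, a⟫ : ℝ) : ℂ))
      + (-((‖B₂ w‖ : ℂ) ^ 2) / (2 * l₂)
        + Complex.I * l₂ ^ (-(1 : ℂ) / 2) * ((⟪B₂ w, a⟫ : ℝ) : ℂ)))

/-- The dominating function `k(q₀; w)` of equation (3.10) of the paper. -/
noncomputable def kfun {H : Type*} [NormedAddCommGroup H] [InnerProductSpace ℝ H]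
    (B₁ B₂ : H →L[ℝ] H) (a : H) (q₀ : ℝ) (w : H) : ℝ :=
  Real.exp ((2 * q₀) ^ (-(1 : ℝ) / 2) * ‖B₁‖ * ‖w‖ * ‖a‖
    + (2 * q₀) ^ (-(1 : ℝ) / 2) * ‖B₂‖ * ‖w‖ * ‖a‖)


lemma rpow_half_eq {q₀ : ℝ} (hq₀ : 0 < q₀) :
    (2 * q₀) ^ (-(1:ℝ)/2) = 1 / Real.sqrt (2*q₀) := by
  rw [Real.sqrt_eq_rpow, neg_div, Real.rpow_neg (by positivity)]
  exact (one_div _).symm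

lemma exp_sq_bound {ε : ℝ} (t : ℝ) (hε : 0 < ε) : t^2 * Real.exp (-(ε * t^2)) ≤ 1/ε := by
  have h1 : ε * t^2 ≤ Real.exp (ε * t^2) := by
    have := Real.add_one_le_exp (ε * t^2); linarith
  have h2 := Real.exp_pos (ε * t^2)
  have h3 : (Real.exp (ε*t^2))⁻¹ * Real.exp (ε*t^2) = 1 := inv_mul_cancel₀ h2.ne'
  rw [Real.exp_neg, le_div_iff₀ hε]
  nlinarith [sq_nonneg t, inv_pos.mpr h2]

lemma exp_lin_bound {ε : ℝ} (t : ℝ) (hε : 0 < ε) (ht : 0 ≤ t) :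
    t * Real.exp (-(ε * t^2)) ≤ 1 + 1/ε := by
  have h3 := Real.exp_pos (-(ε*t^2))
  have h0 : Real.exp (-(ε*t^2)) ≤ 1 := by
    rw [Real.exp_le_one_iff]; nlinarith
  have ht1 : t ≤ 1 + t^2 := by nlinarith [sq_nonneg (t-1)]
  have h1 : t * Real.exp (-(ε * t^2)) ≤ (1 + t^2) * Real.exp (-(ε * t^2)) :=
    mul_le_mul_of_nonneg_right ht1 h3.le
  have h2 := exp_sq_bound t hε
  nlinarith



lemma term_re_le {H : Type*} [NormedAddCommGroup H] [InnerProductSpace ℝ H]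
    (B : H →L[ℝ] H) (a w : H) {l : ℂ} (hre : 0 < l.re) {s : ℝ}
    (him : |(l ^ (-(1:ℂ)/2)).im| ≤ s) :
    (-((‖B w‖ : ℂ) ^ 2) / (2 * l)
        + Complex.I * l ^ (-(1 : ℂ) / 2) * ((⟪B w, a⟫ : ℝ) : ℂ)).re
      ≤ -(l.re / (2 * Complex.normSq l)) * ‖B w‖^2 + s * (‖B‖ * ‖w‖ * ‖a‖) := by
  have hns : 0 < Complex.normSq l := by
    apply Complex.normSq_pos.mpr; intro h; rw [h] at hre; simp at hre
  rw [Complex.add_re]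
  have e1 : (-((‖B w‖ : ℂ) ^ 2) / (2 * l)).re
      = -(l.re / (2 * Complex.normSq l)) * ‖B w‖^2 := by
    have hcast : -((‖B w‖ : ℂ) ^ 2) = ((-(‖B w‖^2) : ℝ) : ℂ) := by push_cast; ring
    rw [div_eq_mul_inv, hcast, Complex.re_ofReal_mul, Complex.inv_re]
    have hN : Complex.normSq (2*l) = 4 * Complex.normSq l := by
      simp [Complex.normSq_apply, Complex.mul_re, Complex.mul_im]; ring
    have h2re : (2*l).re = 2 * l.re := by simp
    rw [hN, h2re]
    field_simp [hns.ne']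
    ring
  have e2 : (Complex.I * l ^ (-(1 : ℂ) / 2) * ((⟪B w, a⟫ : ℝ) : ℂ)).re
      = -(l ^ (-(1:ℂ)/2)).im * ⟪B w, a⟫ := by
    simp [Complex.mul_re, Complex.mul_im]
  rw [e1, e2]
  have hd : |(⟪B w, a⟫ : ℝ)| ≤ ‖B‖ * ‖w‖ * ‖a‖ := by
    refine (abs_real_inner_le_norm _ _).trans ?_
    exact mul_le_mul_of_nonneg_right (B.le_opNorm w) (norm_nonneg a)
  have : -(l ^ (-(1:ℂ)/2)).im * ⟪B w, a⟫ ≤ s * (‖B‖ * ‖w‖ * ‖a‖) := by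
    calc -(l ^ (-(1:ℂ)/2)).im * ⟪B w, a⟫ ≤ |(-(l ^ (-(1:ℂ)/2)).im * ⟪B w, a⟫)| := le_abs_self _
    _ = |(l ^ (-(1:ℂ)/2)).im| * |(⟪B w, a⟫ : ℝ)| := by rw [abs_mul, abs_neg]
    _ ≤ s * (‖B‖ * ‖w‖ * ‖a‖) :=
        mul_le_mul him hd (abs_nonneg _) ((abs_nonneg _).trans him)
  linarith

lemma psi_abs_le {H : Type*} [NormedAddCommGroup H] [InnerProductSpace ℝ H]
    (B₁ B₂ : H →L[ℝ] H) (a : H) (q₀ : ℝ)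
    {l₁ l₂ : ℂ} (h₁re : 0 < l₁.re)
    (h₁im : |(l₁ ^ (-(1:ℂ)/2)).im| ≤ (2*q₀) ^ (-(1:ℝ)/2))
    (h₂re : 0 < l₂.re)
    (h₂im : |(l₂ ^ (-(1:ℂ)/2)).im| ≤ (2*q₀) ^ (-(1:ℝ)/2)) (w : H) :
    ‖psi B₁ B₂ a l₁ l₂ w‖
      ≤ Real.exp (-(l₁.re / (2 * Complex.normSq l₁)) * ‖B₁ w‖^2)
        * kfun B₁ B₂ a q₀ w := by
  unfold psi kfun
  rw [Complex.norm_exp, ← Real.exp_add]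
  apply Real.exp_le_exp.mpr
  rw [Complex.add_re]
  have h1 := term_re_le B₁ a w h₁re h₁im
  have h2 := term_re_le B₂ a w h₂re h₂im
  have hns : 0 < Complex.normSq l₂ := by
    apply Complex.normSq_pos.mpr; intro h; rw [h] at h₂re; simp at h₂re
  have hA2 : -(l₂.re / (2 * Complex.normSq l₂)) * ‖B₂ w‖^2 ≤ 0 := by
    have h0 : 0 ≤ l₂.re / (2 * Complex.normSq l₂) := by positivity
    nlinarith [sq_nonneg ‖B₂ w‖]
  have e : (2*q₀) ^ (-(1:ℝ)/2) * ‖B₁‖ * ‖w‖ * ‖a‖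
      = (2*q₀) ^ (-(1:ℝ)/2) * (‖B₁‖ * ‖w‖ * ‖a‖) := by ring
  have e2 : (2*q₀) ^ (-(1:ℝ)/2) * ‖B₂‖ * ‖w‖ * ‖a‖
      = (2*q₀) ^ (-(1:ℝ)/2) * (‖B₂‖ * ‖w‖ * ‖a‖) := by ring
  rw [e, e2]
  linarith

lemma psi_cont {H : Type*} [NormedAddCommGroup H] [InnerProductSpace ℝ H]
    (B₁ B₂ : H →L[ℝ] H) (a : H) (l₁ l₂ : ℂ) :
    Continuous (fun w => psi B₁ B₂ a l₁ l₂ w) := by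
  unfold psi
  apply Complex.continuous_exp.comp
  have hn1 : Continuous fun w : H => ((‖B₁ w‖ : ℂ)) :=
    Complex.continuous_ofReal.comp B₁.continuous.norm
  have hn2 : Continuous fun w : H => ((‖B₂ w‖ : ℂ)) :=
    Complex.continuous_ofReal.comp B₂.continuous.norm
  have hi1 : Continuous fun w : H => (((⟪B₁ w, a⟫ : ℝ) : ℂ)) :=
    Complex.continuous_ofReal.comp (B₁.continuous.inner continuous_const)
  have hi2 : Continuous fun w : H => (((⟪B₂ w, a⟫ : ℝ) : ℂ)) :=
    Complex.continuous_ofReal.comp (B₂.continuous.inner continuous_const)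
  exact (((hn1.pow 2).neg.div_const _).add (continuous_const.mul hi1)).add
    (((hn2.pow 2).neg.div_const _).add (continuous_const.mul hi2))

lemma integrable_main {H : Type*} [NormedAddCommGroup H] [InnerProductSpace ℝ H]
    [MeasurableSpace H] [BorelSpace H] [TopologicalSpace.SeparableSpace H]
    (B₁ B₂ : H →L[ℝ] H) (a : H) (q₀ : ℝ)
    (μ : Measure H) (ρ : H → ℂ) (hρ : Measurable ρ)
    (hk : Integrable (fun w => kfun B₁ B₂ a q₀ w * ‖ρ w‖) μ)
    (φ : H → ℂ) (hφm : Measurable φ) (hφ : ∀ w, ‖φ w‖ ≤ 1)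
    {l₁ l₂ : ℂ} (h₁re : 0 < l₁.re)
    (h₁im : |(l₁ ^ (-(1:ℂ)/2)).im| ≤ (2*q₀) ^ (-(1:ℝ)/2))
    (h₂re : 0 < l₂.re)
    (h₂im : |(l₂ ^ (-(1:ℂ)/2)).im| ≤ (2*q₀) ^ (-(1:ℝ)/2)) :
    Integrable (fun w => φ w * psi B₁ B₂ a l₁ l₂ w * ρ w) μ := by
  refine hk.mono' ?_ ?_
  · exact ((hφm.mul (psi_cont B₁ B₂ a l₁ l₂).measurable).mul hρ).aestronglyMeasurable
  · filter_upwards with w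
    rw [norm_mul, norm_mul]
    have h1 := psi_abs_le B₁ B₂ a q₀ h₁re h₁im h₂re h₂im w
    have hns : 0 < Complex.normSq l₁ := by
      apply Complex.normSq_pos.mpr; intro h; rw [h] at h₁re; simp at h₁re
    have hexp1 : Real.exp (-(l₁.re / (2 * Complex.normSq l₁)) * ‖B₁ w‖^2) ≤ 1 := by
      rw [Real.exp_le_one_iff]
      have h0 : 0 ≤ l₁.re / (2 * Complex.normSq l₁) := by positivity
      nlinarith [sq_nonneg ‖B₁ w‖]
    have hk0 : 0 < kfun B₁ B₂ a q₀ w := Real.exp_pos _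
    have h2 : ‖psi B₁ B₂ a l₁ l₂ w‖ ≤ kfun B₁ B₂ a q₀ w := by
      calc ‖psi B₁ B₂ a l₁ l₂ w‖
          ≤ Real.exp (-(l₁.re / (2 * Complex.normSq l₁)) * ‖B₁ w‖^2)
            * kfun B₁ B₂ a q₀ w := h1
        _ ≤ 1 * kfun B₁ B₂ a q₀ w := mul_le_mul_of_nonneg_right hexp1 hk0.le
        _ = kfun B₁ B₂ a q₀ w := one_mul _
    calc ‖φ w‖ * ‖psi B₁ B₂ a l₁ l₂ w‖ * ‖ρ w‖
        ≤ 1 * kfun B₁ B₂ a q₀ w * ‖ρ w‖ := by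
          apply mul_le_mul_of_nonneg_right _ (norm_nonneg _)
          exact mul_le_mul (hφ w) h2 (norm_nonneg _) zero_le_one
      _ = kfun B₁ B₂ a q₀ w * ‖ρ w‖ := by ring

noncomputable def dfac {H : Type*} [NormedAddCommGroup H] [InnerProductSpace ℝ H]
    (B₁ : H →L[ℝ] H) (a : H) (z : ℂ) (w : H) : ℂ :=
  (‖B₁ w‖ : ℂ)^2 / (2 * z^2)
    + Complex.I * ((-(1:ℂ)/2) * z ^ (-(1:ℂ)/2 - 1)) * ((⟪B₁ w, a⟫ : ℝ) : ℂ)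

lemma psi_hasDeriv {H : Type*} [NormedAddCommGroup H] [InnerProductSpace ℝ H]
    (B₁ B₂ : H →L[ℝ] H) (a : H) (l₂ : ℂ) (w : H) {z : ℂ} (hz : 0 < z.re) :
    HasDerivAt (fun z => psi B₁ B₂ a z l₂ w)
      (psi B₁ B₂ a z l₂ w * dfac B₁ a z w) z := by
  have hz0 : z ≠ 0 := by intro h; rw [h] at hz; simp at hz
  have hd1 : HasDerivAt (fun z : ℂ => -((‖B₁ w‖ : ℂ)^2) / (2 * z))
      ((‖B₁ w‖ : ℂ)^2 / (2 * z^2)) z := by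
    have h := (hasDerivAt_inv hz0).const_mul (-((‖B₁ w‖ : ℂ)^2) / 2)
    have hfe : (fun z : ℂ => -((‖B₁ w‖ : ℂ)^2) / (2 * z))
        = fun y => -((‖B₁ w‖ : ℂ)^2) / 2 * y⁻¹ := by
      funext y; rw [div_eq_mul_inv, div_eq_mul_inv, mul_inv]; ring
    rw [hfe]
    refine h.congr_deriv ?_
    field_simp
  have hd2 : HasDerivAt (fun z : ℂ => Complex.I * z ^ (-(1:ℂ)/2) * ((⟪B₁ w, a⟫ : ℝ) : ℂ))
      (Complex.I * ((-(1:ℂ)/2) * z ^ (-(1:ℂ)/2 - 1)) * ((⟪B₁ w, a⟫ : ℝ) : ℂ)) z := by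
    have h := ((HasDerivAt.cpow_const (c := -(1:ℂ)/2) (hasDerivAt_id z)
      (Complex.mem_slitPlane_iff.mpr (Or.inl hz))).const_mul Complex.I).mul_const
        ((⟪B₁ w, a⟫ : ℝ) : ℂ)
    refine h.congr_deriv ?_
    simp [id]
  have hsum := ((hd1.add hd2).add_const
    (-((‖B₂ w‖ : ℂ) ^ 2) / (2 * l₂)
      + Complex.I * l₂ ^ (-(1 : ℂ) / 2) * ((⟪B₂ w, a⟫ : ℝ) : ℂ))).cexp
  unfold psi dfac
  exact hsum

lemma dfac_cont {H : Type*} [NormedAddCommGroup H] [InnerProductSpace ℝ H]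
    (B₁ : H →L[ℝ] H) (a : H) (z : ℂ) : Continuous (fun w => dfac B₁ a z w) := by
  unfold dfac
  have hn1 : Continuous fun w : H => ((‖B₁ w‖ : ℂ)) :=
    Complex.continuous_ofReal.comp B₁.continuous.norm
  have hi1 : Continuous fun w : H => (((⟪B₁ w, a⟫ : ℝ) : ℂ)) :=
    Complex.continuous_ofReal.comp (B₁.continuous.inner continuous_const)
  exact ((hn1.pow 2).div_const _).add (continuous_const.mul hi1)

lemma dfac_abs_le {H : Type*} [NormedAddCommGroup H] [InnerProductSpace ℝ H]
    (B₁ : H →L[ℝ] H) (a : H) {z : ℂ} {m : ℝ} (hm : 0 < m)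
    (hz : m ≤ ‖z‖) (w : H) :
    ‖dfac B₁ a z w‖
      ≤ ‖B₁ w‖^2 / (2 * m^2) + (1/2) * m ^ (-(3:ℝ)/2) * (‖B₁ w‖ * ‖a‖) := by
  have hz0 : z ≠ 0 := by
    intro h; rw [h] at hz; simp at hz; linarith
  refine (norm_add_le _ _).trans (add_le_add ?_ ?_)
  · rw [norm_div, norm_mul, norm_pow, Complex.norm_real, norm_norm, norm_pow]
    simp only [Complex.norm_ofNat]
    apply div_le_div_of_nonneg_left (by positivity) (by positivity)
    have : m^2 ≤ ‖z‖ ^ 2 := by nlinarith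
    nlinarith
  · rw [norm_mul, norm_mul, Complex.norm_I, one_mul, norm_mul, Complex.norm_real, Real.norm_eq_abs]
    have he : (-(1:ℂ)/2 - 1) = ((-(3:ℝ)/2 : ℝ) : ℂ) := by norm_num
    have habs : ‖z ^ (-(1:ℂ)/2 - 1)‖ = ‖z‖ ^ (-(3:ℝ)/2) := by
      rw [Complex.norm_cpow_of_ne_zero hz0]
      rw [he]
      simp [Complex.ofReal_re, Complex.ofReal_im]
    have h1 : ‖-(1:ℂ)/2‖ = 1/2 := by
      rw [show (-(1:ℂ)/2) = ((-(1:ℝ)/2 : ℝ) : ℂ) by norm_num, Complex.norm_real]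
      norm_num
    rw [h1, habs]
    have h2 : ‖z‖ ^ (-(3:ℝ)/2) ≤ m ^ (-(3:ℝ)/2) :=
      Real.rpow_le_rpow_of_nonpos hm hz (by norm_num)
    have h3 : |(⟪B₁ w, a⟫ : ℝ)| ≤ ‖B₁ w‖ * ‖a‖ := abs_real_inner_le_norm _ _
    have h4 : (0:ℝ) ≤ ‖z‖ ^ (-(3:ℝ)/2) := Real.rpow_nonneg (by positivity) _
    calc 1/2 * ‖z‖ ^ (-(3:ℝ)/2) * |(⟪B₁ w, a⟫ : ℝ)|
        ≤ 1/2 * m ^ (-(3:ℝ)/2) * (‖B₁ w‖ * ‖a‖) := by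
          apply mul_le_mul _ h3 (abs_nonneg _) (by positivity)
          apply mul_le_mul_of_nonneg_left h2 (by norm_num)
      _ = 1/2 * m ^ (-(3:ℝ)/2) * (‖B₁ w‖ * ‖a‖) := rfl

lemma aux_diff {H : Type*} [NormedAddCommGroup H] [InnerProductSpace ℝ H]
    [MeasurableSpace H] [BorelSpace H] [TopologicalSpace.SeparableSpace H]
    (B₁ B₂ : H →L[ℝ] H) (a : H) (q₀ : ℝ) (hq₀ : 0 < q₀)
    (μ : Measure H) [IsFiniteMeasure μ]
    (ρ : H → ℂ) (hρ : Measurable ρ)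
    (hk : Integrable (fun w => kfun B₁ B₂ a q₀ w * ‖ρ w‖) μ)
    (φ : H → ℂ) (hφm : Measurable φ) (hφ : ∀ w, ‖φ w‖ ≤ 1)
    {l₂ : ℂ} (h₂re : 0 < l₂.re)
    (h₂im : |(l₂ ^ (-(1:ℂ)/2)).im| < 1 / Real.sqrt (2*q₀))
    {l₁ : ℂ} (h₁re : 0 < l₁.re)
    (h₁im : |(l₁ ^ (-(1:ℂ)/2)).im| < 1 / Real.sqrt (2*q₀)) :
    DifferentiableAt ℂ (fun z => ∫ w, φ w * psi B₁ B₂ a z l₂ w * ρ w ∂μ) l₁ := by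
  have hs : (1:ℝ) / Real.sqrt (2*q₀) = (2*q₀) ^ (-(1:ℝ)/2) := (rpow_half_eq hq₀).symm
  -- find a suitable ball
  have hev : ∀ᶠ z in nhds l₁,
      ((0 < z.re ∧ |(z ^ (-(1:ℂ)/2)).im| < 1 / Real.sqrt (2*q₀)) ∧ l₁.re/2 < z.re) := by
    have hc1 : ContinuousAt (fun z : ℂ => z.re) l₁ := Complex.continuous_re.continuousAt
    have hc2 : ContinuousAt (fun z : ℂ => |(z ^ (-(1:ℂ)/2)).im|) l₁ :=
      (Complex.continuous_im.continuousAt.comp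
        (continuousAt_cpow_const (Complex.mem_slitPlane_iff.mpr (Or.inl h₁re)))).abs
    have e1 : ∀ᶠ z in nhds l₁, l₁.re/2 < z.re :=
      hc1.eventually_const_lt (by linarith)
    have e2 : ∀ᶠ z in nhds l₁, |(z ^ (-(1:ℂ)/2)).im| < 1 / Real.sqrt (2*q₀) :=
      hc2.eventually_lt_const h₁im
    filter_upwards [e1, e2] with z hz1 hz2
    exact ⟨⟨by linarith, hz2⟩, hz1⟩
  rcases Metric.eventually_nhds_iff_ball.mp hev with ⟨r, hr, hball⟩
  set m : ℝ := l₁.re/2 with hm_def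
  have hm : 0 < m := by simp only [hm_def]; linarith
  set R : ℝ := ‖l₁‖ + r with hR_def
  have hR : 0 < R := by
    have := norm_nonneg l₁; simp only [hR_def]; linarith
  set εq : ℝ := m / (2 * R^2) with hεq_def
  have hεq : 0 < εq := by positivity
  set C : ℝ := (1/εq) / (2*m^2) + (1/2) * m ^ (-(3:ℝ)/2) * ‖a‖ * (1 + 1/εq) with hC_def
  -- facts about points of the ball
  have hball' : ∀ z ∈ Metric.ball l₁ r,
      (0 < z.re ∧ |(z ^ (-(1:ℂ)/2)).im| < 1 / Real.sqrt (2*q₀))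
        ∧ m ≤ z.re ∧ m ≤ ‖z‖ ∧ ‖z‖ ≤ R := by
    intro z hz
    have h := hball z hz
    refine ⟨h.1, le_of_lt h.2, ?_, ?_⟩
    · exact le_trans (le_of_lt h.2) (Complex.re_le_norm z)
    · have hd : ‖z - l₁‖ < r := by
        rw [← Complex.dist_eq]; exact Metric.mem_ball.mp hz
      calc ‖z‖ = ‖l₁ + (z - l₁)‖ := by ring_nf
        _ ≤ ‖l₁‖ + ‖z - l₁‖ := norm_add_le _ _
        _ ≤ R := by simp only [hR_def]; linarith
  -- the key uniform bound for the derivative integrand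
  have key : ∀ z ∈ Metric.ball l₁ r, ∀ w,
      ‖φ w * (psi B₁ B₂ a z l₂ w * dfac B₁ a z w) * ρ w‖
        ≤ C * (kfun B₁ B₂ a q₀ w * ‖ρ w‖) := by
    intro z hz w
    obtain ⟨⟨hzre, hzim⟩, hzm, hzam, hzaR⟩ := hball' z hz
    have hnsz : 0 < Complex.normSq z := by
      apply Complex.normSq_pos.mpr; intro h; rw [h] at hzre; simp at hzre
    have hpsi := psi_abs_le B₁ B₂ a q₀ hzre (by rw [← hs]; exact le_of_lt hzim)
      h₂re (by rw [← hs]; exact le_of_lt h₂im) w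
    have hdfac := dfac_abs_le B₁ a hm hzam w
    set t := ‖B₁ w‖ with ht_def
    have ht : 0 ≤ t := norm_nonneg _
    -- exponent comparison
    have hexp : Real.exp (-(z.re / (2 * Complex.normSq z)) * t^2)
        ≤ Real.exp (-(εq * t^2)) := by
      apply Real.exp_le_exp.mpr
      have h1 : εq ≤ z.re / (2 * Complex.normSq z) := by
        rw [hεq_def]
        apply div_le_div₀ hzre.le ?_ (by positivity) ?_
        · exact hzm
        · rw [Complex.normSq_eq_norm_sq]
          nlinarith
      nlinarith [sq_nonneg t]
    have hkpos : (0:ℝ) < kfun B₁ B₂ a q₀ w := Real.exp_pos _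
    rw [norm_mul, norm_mul, norm_mul]
    have habs_dfac : ‖dfac B₁ a z w‖
        ≤ t^2 / (2*m^2) + (1/2) * m ^ (-(3:ℝ)/2) * (t * ‖a‖) := hdfac
    have hmain : ‖psi B₁ B₂ a z l₂ w‖ * ‖dfac B₁ a z w‖
        ≤ C * kfun B₁ B₂ a q₀ w := by
      have h1 : ‖psi B₁ B₂ a z l₂ w‖
          ≤ Real.exp (-(εq * t^2)) * kfun B₁ B₂ a q₀ w :=
        hpsi.trans (mul_le_mul_of_nonneg_right hexp hkpos.le)
      calc ‖psi B₁ B₂ a z l₂ w‖ * ‖dfac B₁ a z w‖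
          ≤ (Real.exp (-(εq * t^2)) * kfun B₁ B₂ a q₀ w)
            * (t^2 / (2*m^2) + (1/2) * m ^ (-(3:ℝ)/2) * (t * ‖a‖)) :=
            mul_le_mul h1 habs_dfac (norm_nonneg _) (by positivity)
        _ = (t^2 * Real.exp (-(εq * t^2))) / (2*m^2) * kfun B₁ B₂ a q₀ w
            + (t * Real.exp (-(εq * t^2))) * ((1/2) * m ^ (-(3:ℝ)/2) * ‖a‖)
              * kfun B₁ B₂ a q₀ w := by ring
        _ ≤ (1/εq) / (2*m^2) * kfun B₁ B₂ a q₀ w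
            + (1 + 1/εq) * ((1/2) * m ^ (-(3:ℝ)/2) * ‖a‖) * kfun B₁ B₂ a q₀ w := by
            have b1 := exp_sq_bound t hεq
            have b2 := exp_lin_bound t hεq ht
            gcongr
        _ = C * kfun B₁ B₂ a q₀ w := by rw [hC_def]; ring
    calc ‖φ w‖ * (‖psi B₁ B₂ a z l₂ w‖
          * ‖dfac B₁ a z w‖) * ‖ρ w‖
        ≤ 1 * (C * kfun B₁ B₂ a q₀ w) * ‖ρ w‖ := by
          apply mul_le_mul_of_nonneg_right _ (norm_nonneg _)
          exact mul_le_mul (hφ w) hmain (by positivity) zero_le_one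
      _ = C * (kfun B₁ B₂ a q₀ w * ‖ρ w‖) := by ring
  -- apply dominated differentiation
  have hmeas : ∀ z : ℂ, AEStronglyMeasurable
      (fun w => φ w * psi B₁ B₂ a z l₂ w * ρ w) μ := fun z =>
    ((hφm.mul (psi_cont B₁ B₂ a z l₂).measurable).mul hρ).aestronglyMeasurable
  have h'meas : AEStronglyMeasurable
      (fun w => φ w * (psi B₁ B₂ a l₁ l₂ w * dfac B₁ a l₁ w) * ρ w) μ :=
    ((hφm.mul ((psi_cont B₁ B₂ a l₁ l₂).measurable.mul
      (dfac_cont B₁ a l₁).measurable)).mul hρ).aestronglyMeasurable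
  have hint : Integrable (fun w => φ w * psi B₁ B₂ a l₁ l₂ w * ρ w) μ :=
    integrable_main B₁ B₂ a q₀ μ ρ hρ hk φ hφm hφ h₁re
      (by rw [← hs]; exact le_of_lt h₁im) h₂re (by rw [← hs]; exact le_of_lt h₂im)
  have hdiff : ∀ᵐ w ∂μ, ∀ z ∈ Metric.ball l₁ r,
      HasDerivAt (fun z => φ w * psi B₁ B₂ a z l₂ w * ρ w)
        (φ w * (psi B₁ B₂ a z l₂ w * dfac B₁ a z w) * ρ w) z := by
    filter_upwards with w z hz
    exact ((psi_hasDeriv B₁ B₂ a l₂ w (hball' z hz).1.1).const_mul (φ w)).mul_const (ρ w)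
  have := hasDerivAt_integral_of_dominated_loc_of_deriv_le (Metric.ball_mem_nhds l₁ hr)
    (Filter.Eventually.of_forall hmeas) hint h'meas
    (Filter.Eventually.of_forall (fun w z hz => key z hz w))
    (hk.const_mul C) hdiff
  exact this.2.differentiableAt

lemma psi_comm {H : Type*} [NormedAddCommGroup H] [InnerProductSpace ℝ H]
    (B₁ B₂ : H →L[ℝ] H) (a : H) (l₁ l₂ : ℂ) (w : H) :
    psi B₁ B₂ a l₁ l₂ w = psi B₂ B₁ a l₂ l₁ w := by
  unfold psi; rw [add_comm]

lemma kfun_comm {H : Type*} [NormedAddCommGroup H] [InnerProductSpace ℝ H]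
    (B₁ B₂ : H →L[ℝ] H) (a : H) (q₀ : ℝ) (w : H) :
    kfun B₁ B₂ a q₀ w = kfun B₂ B₁ a q₀ w := by
  unfold kfun; rw [add_comm]


/-- Analyticity assertion from the proof of Theorem 3.1: on the interior of the
region `Γ_{q₀}`, the integrand is integrable and `T(λ₁, λ₂)` is analytic in each
variable separately. -/
theorem stmt10 {H : Type*} [NormedAddCommGroup H] [InnerProductSpace ℝ H]
    [TopologicalSpace.SeparableSpace H] [MeasurableSpace H] [BorelSpace H]
    (B₁ B₂ : H →L[ℝ] H) (a : H) (q₀ : ℝ) (hq₀ : 0 < q₀)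
    (μ : Measure H) [IsFiniteMeasure μ]
    (ρ : H → ℂ) (hρ : Measurable ρ)
    (hk : Integrable (fun w => kfun B₁ B₂ a q₀ w * ‖ρ w‖) μ)
    (φ : H → ℂ) (hφm : Measurable φ) (hφ : ∀ w, ‖φ w‖ ≤ 1)
    (U : Set ℂ)
    (hU : U = {l : ℂ | 0 < l.re ∧ |(l ^ (-(1 : ℂ) / 2)).im| < 1 / Real.sqrt (2 * q₀)}) :
    (∀ l₁ ∈ U, ∀ l₂ ∈ U,
      Integrable (fun w => φ w * psi B₁ B₂ a l₁ l₂ w * ρ w) μ) ∧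
    (∀ l₂ ∈ U, ∀ l₁ ∈ U,
      DifferentiableAt ℂ (fun z => ∫ w, φ w * psi B₁ B₂ a z l₂ w * ρ w ∂μ) l₁) ∧
    (∀ l₁ ∈ U, ∀ l₂ ∈ U,
      DifferentiableAt ℂ (fun z => ∫ w, φ w * psi B₁ B₂ a l₁ z w * ρ w ∂μ) l₂) := by

  subst hU
  have hs : (1:ℝ) / Real.sqrt (2*q₀) = (2*q₀) ^ (-(1:ℝ)/2) := (rpow_half_eq hq₀).symm
  have hk' : Integrable (fun w => kfun B₂ B₁ a q₀ w * ‖ρ w‖) μ := by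
    simpa only [kfun_comm B₂ B₁ a q₀] using hk
  refine ⟨?_, ?_, ?_⟩
  · intro l₁ hl₁ l₂ hl₂
    exact integrable_main B₁ B₂ a q₀ μ ρ hρ hk φ hφm hφ hl₁.1
      (by rw [← hs]; exact le_of_lt hl₁.2) hl₂.1 (by rw [← hs]; exact le_of_lt hl₂.2)
  · intro l₂ hl₂ l₁ hl₁
    exact aux_diff B₁ B₂ a q₀ hq₀ μ ρ hρ hk φ hφm hφ hl₂.1 hl₂.2 hl₁.1 hl₁.2
  · intro l₁ hl₁ l₂ hl₂
    have he : (fun z => ∫ w, φ w * psi B₁ B₂ a l₁ z w * ρ w ∂μ)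
        = (fun z => ∫ w, φ w * psi B₂ B₁ a z l₁ w * ρ w ∂μ) := by
      funext z
      simp only [psi_comm B₁ B₂ a l₁ z]
    rw [he]
    exact aux_diff B₂ B₁ a q₀ hq₀ μ ρ hρ hk' φ hφm hφ hl₁.1 hl₁.2 hl₂.1 hl₂.2
end

section
/- Let H be a separable real Hilbert space, B₁ and B₂ bounded linear operators on H, a ∈ H, q₀ > 0, μ a finite Borel measure on H, ρ : H → ℂ Borel measurable with ∫_H k(q₀; w) |ρ(w)| dμ(w) < ∞, and φ : H → ℂ Borel measurable with |φ(w)| ≤ 1 for all w. Let q₁, q₂ be real numbers with |q₁| > q₀ and |q₂| > q₀. Then the function T(λ₁, λ₂) = ∫_H φ(w) ψ(λ₁, λ₂; w) ρ(w) dμ(w) converges, as (λ₁, λ₂) → (−iq₁, −iq₂) through points with Re(λ₁) > 0 and Re(λ₂) > 0, to ∫_H φ(w) ψ(−iq₁, −iq₂; w) ρ(w) dμ(w) (which is a well-defined integral of a μ-integrable function). -/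
open MeasureTheory
open scoped RealInnerProductSpace

open Real in
lemma my_abs_sin_le {x : ℝ} (hx : |x| ≤ π/4) : |Real.sin x| ≤ Real.sqrt 2 / 2 := by
  have hpi : (0:ℝ) < π := Real.pi_pos
  have h1 : |Real.sin x| = Real.sin |x| := by
    rcases le_or_gt 0 x with h | h
    · rw [abs_of_nonneg h, abs_of_nonneg (Real.sin_nonneg_of_nonneg_of_le_pi h (by
        rw [abs_of_nonneg h] at hx; linarith))]
    · have hs : Real.sin (-x) ≥ 0 := Real.sin_nonneg_of_nonneg_of_le_pi (by linarith) (by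
        rw [abs_of_neg h] at hx; linarith)
      rw [Real.sin_neg] at hs
      rw [abs_of_neg h, abs_of_nonpos (by linarith), Real.sin_neg]
  rw [h1, ← Real.sin_pi_div_four]
  apply (Real.strictMonoOn_sin.monotoneOn) _ _ _
  · constructor <;> [linarith [abs_nonneg x]; linarith]
  · constructor <;> linarith
  · linarith

open Real in
lemma my_im_cpow {l : ℂ} (hl : l ≠ 0) (hre : 0 ≤ l.re) :
    |(l ^ (-(1:ℂ)/2)).im| ≤ Real.sqrt 2 / 2 * ‖l‖ ^ (-(1:ℝ)/2) := by
  have habs : 0 < ‖l‖ := norm_pos_iff.mpr hl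
  rw [Complex.cpow_def_of_ne_zero hl, Complex.exp_im]
  have hc : Complex.log l * (-(1:ℂ)/2) = ((-(1/2 : ℝ)) : ℂ) * Complex.log l := by
    push_cast; ring
  rw [hc]
  have hre' : (((-(1/2 : ℝ)) : ℂ) * Complex.log l).re = -(1/2) * Real.log (‖l‖) := by
    simp [Complex.re_ofReal_mul, Complex.log_re]
  have him' : (((-(1/2 : ℝ)) : ℂ) * Complex.log l).im = -(1/2) * l.arg := by
    simp [Complex.im_ofReal_mul, Complex.log_im]
  rw [hre', him', abs_mul, abs_of_pos (Real.exp_pos _)]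
  have hexp : Real.exp (-(1/2) * Real.log (‖l‖)) = ‖l‖ ^ (-(1:ℝ)/2) := by
    rw [Real.rpow_def_of_pos habs, mul_comm]
    norm_num
  rw [hexp, mul_comm]
  have harg : |l.arg| ≤ π/2 := Complex.abs_arg_le_pi_div_two_iff.mpr hre
  have hsin : |Real.sin (-(1/2) * l.arg)| ≤ Real.sqrt 2 / 2 := by
    apply my_abs_sin_le
    rw [abs_mul]
    rw [abs_of_nonpos (by norm_num : -(1/2:ℝ) ≤ 0)]
    linarith
  have : (0:ℝ) ≤ ‖l‖ ^ (-(1:ℝ)/2) := Real.rpow_nonneg habs.le _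
  exact mul_le_mul_of_nonneg_right hsin this

lemma my_factor_bound {l : ℂ} {q₀ b c : ℝ} (hq₀ : 0 < q₀) (hl : q₀ ≤ ‖l‖)
    (hre : 0 ≤ l.re) (hb : 0 ≤ b) :
    ‖Complex.exp (-(b:ℂ)/(2*l) + Complex.I * l ^ (-(1:ℂ)/2) * (c:ℂ))‖
      ≤ Real.exp ((2*q₀) ^ (-(1:ℝ)/2) * |c|) := by
  have hl0 : l ≠ 0 := by
    intro h; rw [h] at hl; simp at hl; linarith
  rw [Complex.norm_exp]
  apply Real.exp_le_exp.mpr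
  rw [Complex.add_re]
  have h1 : (-(b:ℂ)/(2*l)).re ≤ 0 := by
    rw [div_eq_mul_inv, ← Complex.ofReal_neg, Complex.re_ofReal_mul, Complex.inv_re]
    have h2 : (0:ℝ) ≤ (2*l).re := by simp [Complex.mul_re]; linarith
    have h3 : (0:ℝ) ≤ Complex.normSq (2*l) := Complex.normSq_nonneg _
    have := div_nonneg h2 h3
    nlinarith
  have h2 : (Complex.I * l ^ (-(1:ℂ)/2) * (c:ℂ)).re ≤ (2*q₀) ^ (-(1:ℝ)/2) * |c| := by
    set v := l ^ (-(1:ℂ)/2) with hv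
    have hre2 : (Complex.I * v * (c:ℂ)).re = -v.im * c := by
      simp [Complex.mul_re, Complex.mul_im]
    rw [hre2]
    calc -v.im * c ≤ |(-v.im) * c| := le_abs_self _
      _ = |v.im| * |c| := by rw [abs_mul, abs_neg]
      _ ≤ (Real.sqrt 2 / 2 * ‖l‖ ^ (-(1:ℝ)/2)) * |c| :=
          mul_le_mul_of_nonneg_right (my_im_cpow hl0 hre) (abs_nonneg _)
      _ ≤ (2*q₀) ^ (-(1:ℝ)/2) * |c| := by
          apply mul_le_mul_of_nonneg_right _ (abs_nonneg _)
          have e1 : ((2:ℝ)*q₀) ^ (-(1:ℝ)/2) = 2 ^ (-(1:ℝ)/2) * q₀ ^ (-(1:ℝ)/2) :=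
            Real.mul_rpow (by norm_num) hq₀.le
          have e2 : (2:ℝ) ^ (-(1:ℝ)/2) = Real.sqrt 2 / 2 := by
            have h22 : Real.sqrt 2 * Real.sqrt 2 = 2 := Real.mul_self_sqrt (by norm_num)
            have h2pos : (0:ℝ) < Real.sqrt 2 := by positivity
            rw [show (-(1:ℝ)/2) = -(1/2) by norm_num, Real.rpow_neg (by norm_num),
              ← Real.sqrt_eq_rpow]
            field_simp
            rw [Real.sq_sqrt (by norm_num)]
          rw [e1, e2]
          apply mul_le_mul_of_nonneg_left _ (by positivity)
          exact Real.rpow_le_rpow_of_nonpos hq₀ hl (by norm_num)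
  linarith

lemma my_psi_bound {H : Type*} [NormedAddCommGroup H] [InnerProductSpace ℝ H]
    (B₁ B₂ : H →L[ℝ] H) (a : H) {q₀ : ℝ} (hq₀ : 0 < q₀) {l₁ l₂ : ℂ}
    (h1re : 0 ≤ l₁.re) (h1a : q₀ ≤ ‖l₁‖)
    (h2re : 0 ≤ l₂.re) (h2a : q₀ ≤ ‖l₂‖) (w : H) :
    ‖psi B₁ B₂ a l₁ l₂ w‖ ≤ kfun B₁ B₂ a q₀ w := by
  unfold psi kfun
  rw [Complex.exp_add, norm_mul]
  have hcast : ∀ x : ℝ, -((x:ℂ))^2 = -(((x^2 : ℝ)):ℂ) := by intro x; push_cast; ring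
  have key : ∀ (B : H →L[ℝ] H) (l : ℂ), 0 ≤ l.re → q₀ ≤ ‖l‖ →
      ‖Complex.exp (-((‖B w‖ : ℂ) ^ 2) / (2 * l)
          + Complex.I * l ^ (-(1 : ℂ) / 2) * ((⟪B w, a⟫ : ℝ) : ℂ))‖
        ≤ Real.exp ((2 * q₀) ^ (-(1 : ℝ) / 2) * ‖B‖ * ‖w‖ * ‖a‖) := by
    intro B l hre ha
    have hb : (0:ℝ) ≤ ‖B w‖ ^ 2 := sq_nonneg _
    have := my_factor_bound (c := (⟪B w, a⟫ : ℝ)) hq₀ ha hre hb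
    rw [show -((‖B w‖ ^ 2 : ℝ) : ℂ) = -((‖B w‖ : ℂ) ^ 2) by push_cast; ring] at this
    refine this.trans (Real.exp_le_exp.mpr ?_)
    have hc1 : |(⟪B w, a⟫ : ℝ)| ≤ ‖B w‖ * ‖a‖ := abs_real_inner_le_norm _ _
    have hc2 : ‖B w‖ ≤ ‖B‖ * ‖w‖ := B.le_opNorm w
    have hnn : (0:ℝ) ≤ (2 * q₀) ^ (-(1 : ℝ) / 2) := Real.rpow_nonneg (by linarith) _
    have hc3 : |(⟪B w, a⟫ : ℝ)| ≤ ‖B‖ * ‖w‖ * ‖a‖ := by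
      refine hc1.trans ?_
      exact mul_le_mul_of_nonneg_right hc2 (norm_nonneg _)
    calc (2 * q₀) ^ (-(1 : ℝ) / 2) * |(⟪B w, a⟫ : ℝ)|
        ≤ (2 * q₀) ^ (-(1 : ℝ) / 2) * (‖B‖ * ‖w‖ * ‖a‖) :=
          mul_le_mul_of_nonneg_left hc3 hnn
      _ = (2 * q₀) ^ (-(1 : ℝ) / 2) * ‖B‖ * ‖w‖ * ‖a‖ := by ring
  rw [Real.exp_add]
  exact mul_le_mul (key B₁ l₁ h1re h1a) (key B₂ l₂ h2re h2a)
    (norm_nonneg _) (Real.exp_pos _).le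

lemma my_term_contAt (z c : ℂ) {l₀ : ℂ} (h : l₀.im ≠ 0) :
    ContinuousAt (fun l : ℂ => z/(2*l) + Complex.I * l ^ (-(1:ℂ)/2) * c) l₀ := by
  have hl0 : l₀ ≠ 0 := fun h0 => h (by simp [h0])
  apply ContinuousAt.add
  · exact ContinuousAt.div continuousAt_const (by fun_prop) (by simp [hl0])
  · exact (continuousAt_const.mul
      (continuousAt_cpow_const (Complex.mem_slitPlane_iff.mpr (Or.inr h)))).mul
      continuousAt_const

lemma my_psi_contAt {H : Type*} [NormedAddCommGroup H] [InnerProductSpace ℝ H]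
    (B₁ B₂ : H →L[ℝ] H) (a : H) (w : H) {pt : ℂ × ℂ}
    (h1 : pt.1.im ≠ 0) (h2 : pt.2.im ≠ 0) :
    ContinuousAt (fun p : ℂ × ℂ => psi B₁ B₂ a p.1 p.2 w) pt := by
  unfold psi
  apply Complex.continuous_exp.continuousAt.comp
  exact ((my_term_contAt _ _ h1).comp continuousAt_fst).add
    ((my_term_contAt _ _ h2).comp continuousAt_snd)

lemma my_psi_cont_w {H : Type*} [NormedAddCommGroup H] [InnerProductSpace ℝ H]
    (B₁ B₂ : H →L[ℝ] H) (a : H) (l₁ l₂ : ℂ) :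
    Continuous fun w : H => psi B₁ B₂ a l₁ l₂ w := by
  unfold psi
  have c1 : ∀ B : H →L[ℝ] H, Continuous fun w : H => ((⟪B w, a⟫ : ℝ) : ℂ) :=
    fun B => Complex.continuous_ofReal.comp (B.continuous.inner continuous_const)
  have c2 : ∀ B : H →L[ℝ] H, Continuous fun w : H => ((‖B w‖ : ℝ) : ℂ) :=
    fun B => Complex.continuous_ofReal.comp (continuous_norm.comp B.continuous)
  exact Complex.continuous_exp.comp
    (Continuous.add
      (Continuous.add (((c2 B₁).pow 2).neg.div_const _) (continuous_const.mul (c1 B₁)))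
      (Continuous.add (((c2 B₂).pow 2).neg.div_const _) (continuous_const.mul (c1 B₂))))

/-- Boundary-limit assertion of Theorem 3.1 (the `L₁` analytic generalized
Fourier–Feynman transform): as `(λ₁, λ₂) → (−iq₁, −iq₂)` through points with
positive real parts, `T(λ₁, λ₂)` converges to the integral at `(−iq₁, −iq₂)`,
which is a well-defined integral of a `μ`-integrable function. -/
theorem stmt11 {H : Type*} [NormedAddCommGroup H] [InnerProductSpace ℝ H]
    [TopologicalSpace.SeparableSpace H] [MeasurableSpace H] [BorelSpace H]
    (B₁ B₂ : H →L[ℝ] H) (a : H) (q₀ : ℝ) (hq₀ : 0 < q₀)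
    (μ : Measure H) [IsFiniteMeasure μ]
    (ρ : H → ℂ) (hρ : Measurable ρ)
    (hk : Integrable (fun w => kfun B₁ B₂ a q₀ w * ‖ρ w‖) μ)
    (φ : H → ℂ) (hφm : Measurable φ) (hφ : ∀ w, ‖φ w‖ ≤ 1)
    (q₁ q₂ : ℝ) (hq₁ : q₀ < |q₁|) (hq₂ : q₀ < |q₂|) :
    Integrable
      (fun w => φ w * psi B₁ B₂ a (-Complex.I * q₁) (-Complex.I * q₂) w * ρ w) μ ∧
    Filter.Tendsto
      (fun p : ℂ × ℂ => ∫ w, φ w * psi B₁ B₂ a p.1 p.2 w * ρ w ∂μ)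
      (nhdsWithin (-Complex.I * q₁, -Complex.I * q₂)
        {p : ℂ × ℂ | 0 < p.1.re ∧ 0 < p.2.re})
      (nhds (∫ w, φ w * psi B₁ B₂ a (-Complex.I * q₁) (-Complex.I * q₂) w * ρ w ∂μ)) := by
  set pt : ℂ × ℂ := (-Complex.I * q₁, -Complex.I * q₂) with hpt
  have habs1 : ‖-Complex.I * (q₁:ℂ)‖ = |q₁| := by
    simp [map_mul]
  have habs2 : ‖-Complex.I * (q₂:ℂ)‖ = |q₂| := by
    simp [map_mul]
  have hre1 : (-Complex.I * (q₁:ℂ)).re = 0 := by simp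
  have hre2 : (-Complex.I * (q₂:ℂ)).re = 0 := by simp
  have him1 : (-Complex.I * (q₁:ℂ)).im ≠ 0 := by
    simp only [neg_mul, Complex.neg_im, Complex.mul_im, Complex.I_re, Complex.I_im,
      Complex.ofReal_re, Complex.ofReal_im]
    simp only [one_mul, zero_mul, zero_add, neg_ne_zero, ne_eq]
    intro h; rw [h] at hq₁; simp at hq₁; linarith
  have him2 : (-Complex.I * (q₂:ℂ)).im ≠ 0 := by
    simp only [neg_mul, Complex.neg_im, Complex.mul_im, Complex.I_re, Complex.I_im,
      Complex.ofReal_re, Complex.ofReal_im]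
    simp only [one_mul, zero_mul, zero_add, neg_ne_zero, ne_eq]
    intro h; rw [h] at hq₂; simp at hq₂; linarith
  -- measurability of all integrands
  have hFmeas : ∀ l₁ l₂ : ℂ,
      AEStronglyMeasurable (fun w => φ w * psi B₁ B₂ a l₁ l₂ w * ρ w) μ := fun l₁ l₂ =>
    ((hφm.mul (my_psi_cont_w B₁ B₂ a l₁ l₂).measurable).mul hρ).aestronglyMeasurable
  -- pointwise bound
  have hbound : ∀ l₁ l₂ : ℂ, 0 ≤ l₁.re → q₀ ≤ ‖l₁‖ →
      0 ≤ l₂.re → q₀ ≤ ‖l₂‖ → ∀ w,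
      ‖φ w * psi B₁ B₂ a l₁ l₂ w * ρ w‖ ≤ kfun B₁ B₂ a q₀ w * ‖ρ w‖ := by
    intro l₁ l₂ h1r h1a h2r h2a w
    rw [norm_mul, norm_mul]
    have h1 : ‖φ w‖ * ‖psi B₁ B₂ a l₁ l₂ w‖
        ≤ kfun B₁ B₂ a q₀ w := by
      calc ‖φ w‖ * ‖psi B₁ B₂ a l₁ l₂ w‖
          ≤ 1 * ‖psi B₁ B₂ a l₁ l₂ w‖ :=
            mul_le_mul_of_nonneg_right (hφ w) (norm_nonneg _)
        _ = ‖psi B₁ B₂ a l₁ l₂ w‖ := one_mul _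
        _ ≤ kfun B₁ B₂ a q₀ w := my_psi_bound B₁ B₂ a hq₀ h1r h1a h2r h2a w
    exact mul_le_mul_of_nonneg_right h1 (norm_nonneg _)
  -- integrability at the boundary point
  have hint : Integrable
      (fun w => φ w * psi B₁ B₂ a (-Complex.I * q₁) (-Complex.I * q₂) w * ρ w) μ := by
    refine hk.mono (hFmeas _ _) ?_
    filter_upwards with w
    refine (hbound _ _ (le_of_eq hre1.symm) (by rw [habs1]; linarith)
      (le_of_eq hre2.symm) (by rw [habs2]; linarith) w).trans (le_abs_self _)
  refine ⟨hint, ?_⟩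
  -- dominated convergence
  apply MeasureTheory.tendsto_integral_filter_of_dominated_convergence
    (bound := fun w => kfun B₁ B₂ a q₀ w * ‖ρ w‖)
  · exact Filter.Eventually.of_forall fun p => hFmeas _ _
  · -- eventual bound
    have hopen : IsOpen {p : ℂ × ℂ | q₀ < ‖p.1‖ ∧ q₀ < ‖p.2‖} := by
      apply IsOpen.inter
      · exact isOpen_lt continuous_const (continuous_norm.comp continuous_fst)
      · exact isOpen_lt continuous_const (continuous_norm.comp continuous_snd)
    have hmem : pt ∈ {p : ℂ × ℂ | q₀ < ‖p.1‖ ∧ q₀ < ‖p.2‖} := by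
      refine ⟨?_, ?_⟩
      · show q₀ < ‖-Complex.I * q₁‖; rw [habs1]; exact hq₁
      · show q₀ < ‖-Complex.I * q₂‖; rw [habs2]; exact hq₂
    have h1 := (hopen.mem_nhds hmem : _ ∈ nhds pt)
    filter_upwards [eventually_mem_nhdsWithin,
      Filter.Eventually.filter_mono nhdsWithin_le_nhds h1] with p hpS hpU
    exact Filter.Eventually.of_forall
      (hbound p.1 p.2 hpS.1.le hpU.1.le hpS.2.le hpU.2.le)
  · exact hk
  · -- pointwise limit
    refine Filter.Eventually.of_forall fun w => ?_
    have hc : ContinuousAt (fun p : ℂ × ℂ => φ w * psi B₁ B₂ a p.1 p.2 w * ρ w) pt :=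
      (continuousAt_const.mul (my_psi_contAt B₁ B₂ a w him1 him2)).mul continuousAt_const
    exact (hc.continuousWithinAt).tendsto
end

section
/- Let H be a separable real Hilbert space, B₁ and B₂ bounded linear operators on H, a ∈ H, q₀ > 0, μ a finite Borel measure on H, and ρ : H → ℂ Borel measurable with ∫_H k(q₀; w) |ρ(w)| dμ(w) < ∞. Let q₁, q₂ be real numbers with |q₁| > q₀ and |q₂| > q₀. Then ∫_H |ψ(λ₁, λ₂; w) − ψ(−iq₁, −iq₂; w)| · |ρ(w)| dμ(w) → 0 as (λ₁, λ₂) → (−iq₁, −iq₂) through points with Re(λ₁) > 0 and Re(λ₂) > 0. -/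
open MeasureTheory
open scoped RealInnerProductSpace

lemma my_abs_sin_le_s12 {t : ℝ} (ht : |t| ≤ Real.pi / 4) :
    |Real.sin t| ≤ Real.sqrt 2 / 2 := by
  have hpi := Real.pi_pos
  have h1 : |Real.sin t| = Real.sin |t| := by
    rcases abs_cases t with ⟨h, h0⟩ | ⟨h, h0⟩
    · rw [h] at ht ⊢
      exact abs_of_nonneg (Real.sin_nonneg_of_nonneg_of_le_pi h0 (by linarith))
    · rw [h] at ht ⊢
      rw [Real.sin_neg]
      have : Real.sin t ≤ 0 :=
        Real.sin_nonpos_of_nonpos_of_neg_pi_le h0.le (by linarith)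
      rw [abs_of_nonpos this]
  rw [h1, ← Real.sin_pi_div_four]
  have h0 : 0 ≤ |t| := abs_nonneg t
  exact Real.strictMonoOn_sin.monotoneOn
    ⟨by linarith, by linarith⟩ ⟨by linarith, by linarith⟩ ht

lemma my_im_cpow_le {l : ℂ} (hre : 0 ≤ l.re) (hl : l ≠ 0) {q₀ : ℝ} (hq₀ : 0 < q₀)
    (hq : q₀ ≤ ‖l‖) :
    |(l ^ (-(1 : ℂ) / 2)).im| ≤ (2 * q₀) ^ (-(1 : ℝ) / 2) := by
  have habs : 0 < ‖l‖ := lt_of_lt_of_le hq₀ hq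
  rw [Complex.cpow_def_of_ne_zero hl, Complex.exp_im]
  have hre' : (Complex.log l * (-(1 : ℂ) / 2)).re
      = Real.log (‖l‖) * (-(1 : ℝ) / 2) := by
    simp [Complex.mul_re, Complex.log_re, Complex.log_im]
  have him' : (Complex.log l * (-(1 : ℂ) / 2)).im = -(Complex.arg l) / 2 := by
    simp [Complex.mul_im, Complex.log_re, Complex.log_im]
    ring
  rw [hre', him', abs_mul, abs_of_nonneg (Real.exp_pos _).le,
    ← Real.rpow_def_of_pos habs]
  have harg : |Complex.arg l| ≤ Real.pi / 2 := Complex.abs_arg_le_pi_div_two_iff.2 hre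
  have hsin : |Real.sin (-(Complex.arg l) / 2)| ≤ Real.sqrt 2 / 2 := by
    apply my_abs_sin_le_s12
    rw [abs_div, abs_neg, abs_of_pos (by norm_num : (0:ℝ) < 2)]
    linarith
  calc ‖l‖ ^ (-(1 : ℝ) / 2) * |Real.sin (-(Complex.arg l) / 2)|
      ≤ ‖l‖ ^ (-(1 : ℝ) / 2) * (Real.sqrt 2 / 2) := by
        exact mul_le_mul_of_nonneg_left hsin (Real.rpow_nonneg habs.le _)
    _ = (2 * ‖l‖) ^ (-(1 : ℝ) / 2) := by
        rw [Real.mul_rpow (by norm_num) habs.le]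
        have h2 : (2 : ℝ) ^ (-(1 : ℝ) / 2) = Real.sqrt 2 / 2 := by
          rw [show (-(1:ℝ)/2) = -(1/2) by ring, Real.rpow_neg (by norm_num),
            ← Real.sqrt_eq_rpow]
          have hs : Real.sqrt 2 * Real.sqrt 2 = 2 := Real.mul_self_sqrt (by norm_num)
          have hne : Real.sqrt 2 ≠ 0 := by positivity
          field_simp
          rw [Real.sq_sqrt (by norm_num : (0:ℝ) ≤ 2)]
        rw [h2]; ring
    _ ≤ (2 * q₀) ^ (-(1 : ℝ) / 2) := by
        apply Real.rpow_le_rpow_of_nonpos (by linarith) (by linarith) (by norm_num)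

lemma my_re_div_le {l : ℂ} (hre : 0 ≤ l.re) (x : ℝ) :
    (-((x : ℂ) ^ 2) / (2 * l)).re ≤ 0 := by
  rw [div_eq_mul_inv,
    show (-((x : ℂ) ^ 2)) = ((-(x ^ 2) : ℝ) : ℂ) by push_cast; ring,
    Complex.re_ofReal_mul]
  apply mul_nonpos_of_nonpos_of_nonneg (neg_nonpos.mpr (sq_nonneg x))
  rw [Complex.inv_re]
  apply div_nonneg _ (Complex.normSq_nonneg _)
  simpa using by linarith

lemma my_re_term_le {l : ℂ} (hre : 0 ≤ l.re) (hl : l ≠ 0) {q₀ : ℝ} (hq₀ : 0 < q₀)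
    (hq : q₀ ≤ ‖l‖) (c : ℝ) :
    (Complex.I * l ^ (-(1 : ℂ) / 2) * (c : ℂ)).re
      ≤ (2 * q₀) ^ (-(1 : ℝ) / 2) * |c| := by
  have h : (Complex.I * l ^ (-(1 : ℂ) / 2) * (c : ℂ)).re
      = -((l ^ (-(1 : ℂ) / 2)).im) * c := by
    simp [Complex.mul_re, Complex.mul_im]
  rw [h]
  calc -((l ^ (-(1 : ℂ) / 2)).im) * c ≤ |(-((l ^ (-(1 : ℂ) / 2)).im)) * c| := le_abs_self _
    _ = |(l ^ (-(1 : ℂ) / 2)).im| * |c| := by rw [abs_mul, abs_neg]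
    _ ≤ (2 * q₀) ^ (-(1 : ℝ) / 2) * |c| :=
        mul_le_mul_of_nonneg_right (my_im_cpow_le hre hl hq₀ hq) (abs_nonneg c)

lemma my_abs_psi_le {H : Type*} [NormedAddCommGroup H] [InnerProductSpace ℝ H]
    (B₁ B₂ : H →L[ℝ] H) (a : H) {q₀ : ℝ} (hq₀ : 0 < q₀)
    {l₁ l₂ : ℂ} (h1 : 0 ≤ l₁.re) (h1' : q₀ ≤ ‖l₁‖)
    (h2 : 0 ≤ l₂.re) (h2' : q₀ ≤ ‖l₂‖) (w : H) :
    ‖psi B₁ B₂ a l₁ l₂ w‖ ≤ kfun B₁ B₂ a q₀ w := by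
  have hl₁ : l₁ ≠ 0 := by
    intro h; rw [h] at h1'; simp at h1'; linarith
  have hl₂ : l₂ ≠ 0 := by
    intro h; rw [h] at h2'; simp at h2'; linarith
  rw [psi, kfun, Complex.norm_exp, Real.exp_le_exp]
  simp only [Complex.add_re]
  have ha1 := my_re_div_le h1 ‖B₁ w‖
  have ha2 := my_re_div_le h2 ‖B₂ w‖
  have hb1 := my_re_term_le h1 hl₁ hq₀ h1' (⟪B₁ w, a⟫ : ℝ)
  have hb2 := my_re_term_le h2 hl₂ hq₀ h2' (⟪B₂ w, a⟫ : ℝ)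
  have hc1 : |(⟪B₁ w, a⟫ : ℝ)| ≤ ‖B₁‖ * ‖w‖ * ‖a‖ := by
    calc |(⟪B₁ w, a⟫ : ℝ)| ≤ ‖B₁ w‖ * ‖a‖ := abs_real_inner_le_norm _ _
      _ ≤ ‖B₁‖ * ‖w‖ * ‖a‖ :=
        mul_le_mul_of_nonneg_right (B₁.le_opNorm w) (norm_nonneg a)
  have hc2 : |(⟪B₂ w, a⟫ : ℝ)| ≤ ‖B₂‖ * ‖w‖ * ‖a‖ := by
    calc |(⟪B₂ w, a⟫ : ℝ)| ≤ ‖B₂ w‖ * ‖a‖ := abs_real_inner_le_norm _ _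
      _ ≤ ‖B₂‖ * ‖w‖ * ‖a‖ :=
        mul_le_mul_of_nonneg_right (B₂.le_opNorm w) (norm_nonneg a)
  have hpos : (0:ℝ) ≤ (2 * q₀) ^ (-(1 : ℝ) / 2) := Real.rpow_nonneg (by linarith) _
  nlinarith [mul_le_mul_of_nonneg_left hc1 hpos, mul_le_mul_of_nonneg_left hc2 hpos]

/-- The dominated-convergence estimate at the core of Theorem 3.2:
`∫_H |ψ(λ₁, λ₂; w) − ψ(−iq₁, −iq₂; w)| |ρ(w)| dμ(w) → 0` as
`(λ₁, λ₂) → (−iq₁, −iq₂)` through points with positive real parts. -/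
theorem stmt12 {H : Type*} [NormedAddCommGroup H] [InnerProductSpace ℝ H]
    [TopologicalSpace.SeparableSpace H] [MeasurableSpace H] [BorelSpace H]
    (B₁ B₂ : H →L[ℝ] H) (a : H) (q₀ : ℝ) (hq₀ : 0 < q₀)
    (μ : Measure H) [IsFiniteMeasure μ]
    (ρ : H → ℂ) (hρ : Measurable ρ)
    (hk : Integrable (fun w => kfun B₁ B₂ a q₀ w * ‖ρ w‖) μ)
    (q₁ q₂ : ℝ) (hq₁ : q₀ < |q₁|) (hq₂ : q₀ < |q₂|) :
    Filter.Tendsto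
      (fun p : ℂ × ℂ => ∫ w,
        ‖psi B₁ B₂ a p.1 p.2 w
            - psi B₁ B₂ a (-Complex.I * q₁) (-Complex.I * q₂) w‖
          * ‖ρ w‖ ∂μ)
      (nhdsWithin (-Complex.I * q₁, -Complex.I * q₂)
        {p : ℂ × ℂ | 0 < p.1.re ∧ 0 < p.2.re})
      (nhds 0) := by
  set L : ℂ × ℂ := (-Complex.I * q₁, -Complex.I * q₂) with hL
  set l := nhdsWithin L {p : ℂ × ℂ | 0 < p.1.re ∧ 0 < p.2.re} with hl
  have habs1 : ‖-Complex.I * (q₁ : ℂ)‖ = |q₁| := by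
    rw [norm_mul]; simp
  have habs2 : ‖-Complex.I * (q₂ : ℂ)‖ = |q₂| := by
    rw [norm_mul]; simp
  have hre1 : (-Complex.I * (q₁ : ℂ)).re = 0 := by simp
  have hre2 : (-Complex.I * (q₂ : ℂ)).re = 0 := by simp
  -- continuity of psi in w
  have hcontw : ∀ (c₁ c₂ : ℂ), Continuous (fun w : H => psi B₁ B₂ a c₁ c₂ w) := by
    intro c₁ c₂
    unfold psi
    apply Complex.continuous_exp.comp
    have hn : ∀ (B : H →L[ℝ] H), Continuous fun w : H => ((‖B w‖ : ℝ) : ℂ) :=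
      fun B => Complex.continuous_ofReal.comp B.continuous.norm
    have hi : ∀ (B : H →L[ℝ] H), Continuous fun w : H => ((⟪B w, a⟫ : ℝ) : ℂ) :=
      fun B => Complex.continuous_ofReal.comp (B.continuous.inner continuous_const)
    exact (((((hn B₁).pow 2).neg).div_const _).add (continuous_const.mul (hi B₁))).add
      (((((hn B₂).pow 2).neg).div_const _).add (continuous_const.mul (hi B₂)))
  -- pointwise a.e. measurability
  have hmeas : ∀ᶠ p : ℂ × ℂ in l, AEStronglyMeasurable
      (fun w => ‖psi B₁ B₂ a p.1 p.2 w
        - psi B₁ B₂ a (-Complex.I * q₁) (-Complex.I * q₂) w‖ * ‖ρ w‖) μ := by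
    apply Filter.Eventually.of_forall
    intro p
    apply AEStronglyMeasurable.mul
    · exact (continuous_norm.comp
        (((hcontw p.1 p.2).sub (hcontw _ _)))).aestronglyMeasurable
    · exact (continuous_norm.measurable.comp hρ).aestronglyMeasurable
  -- eventually bound
  have hevabs : ∀ᶠ p : ℂ × ℂ in l, q₀ ≤ ‖p.1‖ ∧ q₀ ≤ ‖p.2‖ := by
    apply nhdsWithin_le_nhds
    have t1 : Filter.Tendsto (fun p : ℂ × ℂ => ‖p.1‖) (nhds L) (nhds |q₁|) := by
      rw [← habs1]
      exact (continuous_norm.comp continuous_fst).continuousAt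
    have t2 : Filter.Tendsto (fun p : ℂ × ℂ => ‖p.2‖) (nhds L) (nhds |q₂|) := by
      rw [← habs2]
      exact (continuous_norm.comp continuous_snd).continuousAt
    filter_upwards [t1.eventually_const_lt hq₁, t2.eventually_const_lt hq₂] with p h1 h2
    exact ⟨h1.le, h2.le⟩
  have hevset : ∀ᶠ p : ℂ × ℂ in l, 0 < p.1.re ∧ 0 < p.2.re :=
    eventually_mem_nhdsWithin
  have hbound : ∀ᶠ p : ℂ × ℂ in l, ∀ᵐ w ∂μ,
      ‖‖psi B₁ B₂ a p.1 p.2 w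
        - psi B₁ B₂ a (-Complex.I * q₁) (-Complex.I * q₂) w‖ * ‖ρ w‖‖
        ≤ 2 * (kfun B₁ B₂ a q₀ w * ‖ρ w‖) := by
    filter_upwards [hevabs, hevset] with p hp hp'
    apply Filter.Eventually.of_forall
    intro w
    rw [Real.norm_eq_abs, abs_of_nonneg (by positivity)]
    have hb1 : ‖psi B₁ B₂ a p.1 p.2 w‖ ≤ kfun B₁ B₂ a q₀ w :=
      my_abs_psi_le B₁ B₂ a hq₀ hp'.1.le hp.1 hp'.2.le hp.2 w
    have hb2 : ‖psi B₁ B₂ a (-Complex.I * q₁) (-Complex.I * q₂) w‖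
        ≤ kfun B₁ B₂ a q₀ w :=
      my_abs_psi_le B₁ B₂ a hq₀ (le_of_eq hre1.symm) (habs1 ▸ hq₁.le)
        (le_of_eq hre2.symm) (habs2 ▸ hq₂.le) w
    have htri : ‖psi B₁ B₂ a p.1 p.2 w
        - psi B₁ B₂ a (-Complex.I * q₁) (-Complex.I * q₂) w‖
        ≤ 2 * kfun B₁ B₂ a q₀ w := by
      calc ‖_‖ ≤ _ + _ := norm_sub_le _ _
        _ ≤ 2 * kfun B₁ B₂ a q₀ w := by linarith
    calc ‖psi B₁ B₂ a p.1 p.2 w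
          - psi B₁ B₂ a (-Complex.I * q₁) (-Complex.I * q₂) w‖ * ‖ρ w‖
        ≤ 2 * kfun B₁ B₂ a q₀ w * ‖ρ w‖ :=
          mul_le_mul_of_nonneg_right htri (norm_nonneg _)
      _ = 2 * (kfun B₁ B₂ a q₀ w * ‖ρ w‖) := by ring
  -- pointwise convergence
  have hq₁0 : q₁ ≠ 0 := fun h => by simp [h] at hq₁; linarith
  have hq₂0 : q₂ ≠ 0 := fun h => by simp [h] at hq₂; linarith
  have hslit1 : (-Complex.I * (q₁ : ℂ)) ∈ Complex.slitPlane := by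
    rw [Complex.mem_slitPlane_iff]
    right
    simp [hq₁0]
  have hslit2 : (-Complex.I * (q₂ : ℂ)) ∈ Complex.slitPlane := by
    rw [Complex.mem_slitPlane_iff]
    right
    simp [hq₂0]
  have hL1 : (-Complex.I * (q₁ : ℂ)) ≠ 0 := Complex.slitPlane_ne_zero hslit1
  have hL2 : (-Complex.I * (q₂ : ℂ)) ≠ 0 := Complex.slitPlane_ne_zero hslit2
  have hcontp : ∀ w : H, ContinuousAt (fun p : ℂ × ℂ => psi B₁ B₂ a p.1 p.2 w) L := by
    intro w
    unfold psi
    apply Complex.continuous_exp.continuousAt.comp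
    have hcp1 : ContinuousAt (fun p : ℂ × ℂ => p.1 ^ (-(1 : ℂ) / 2)) L :=
      ContinuousAt.comp (x := L) (f := Prod.fst) (g := (· ^ (-(1 : ℂ) / 2)))
        (continuousAt_cpow_const hslit1) continuousAt_fst
    have hcp2 : ContinuousAt (fun p : ℂ × ℂ => p.2 ^ (-(1 : ℂ) / 2)) L :=
      ContinuousAt.comp (x := L) (f := Prod.snd) (g := (· ^ (-(1 : ℂ) / 2)))
        (continuousAt_cpow_const hslit2) continuousAt_snd
    have hd1 : ContinuousAt (fun p : ℂ × ℂ => -((‖B₁ w‖ : ℂ) ^ 2) / (2 * p.1)) L := by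
      apply ContinuousAt.div continuousAt_const
        (continuousAt_const.mul continuous_fst.continuousAt)
      simpa [hL] using hL1
    have hd2 : ContinuousAt (fun p : ℂ × ℂ => -((‖B₂ w‖ : ℂ) ^ 2) / (2 * p.2)) L := by
      apply ContinuousAt.div continuousAt_const
        (continuousAt_const.mul continuous_snd.continuousAt)
      simpa [hL] using hL2
    exact (hd1.add ((continuousAt_const.mul hcp1).mul continuousAt_const)).add
      (hd2.add ((continuousAt_const.mul hcp2).mul continuousAt_const))
  have hlim : ∀ᵐ w ∂μ, Filter.Tendsto
      (fun p : ℂ × ℂ => ‖psi B₁ B₂ a p.1 p.2 w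
        - psi B₁ B₂ a (-Complex.I * q₁) (-Complex.I * q₂) w‖ * ‖ρ w‖)
      l (nhds ((fun _ : H => (0:ℝ)) w)) := by
    apply Filter.Eventually.of_forall
    intro w
    have h0 : Filter.Tendsto
        (fun p : ℂ × ℂ => psi B₁ B₂ a p.1 p.2 w) l
        (nhds (psi B₁ B₂ a (-Complex.I * q₁) (-Complex.I * q₂) w)) :=
      (hcontp w).continuousWithinAt
    have hsub : Filter.Tendsto
        (fun p : ℂ × ℂ => psi B₁ B₂ a p.1 p.2 w
          - psi B₁ B₂ a (-Complex.I * q₁) (-Complex.I * q₂) w) l (nhds 0) := by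
      have := h0.sub_const (psi B₁ B₂ a (-Complex.I * q₁) (-Complex.I * q₂) w)
      simpa using this
    have h1 : Filter.Tendsto
        (fun p : ℂ × ℂ => ‖psi B₁ B₂ a p.1 p.2 w
          - psi B₁ B₂ a (-Complex.I * q₁) (-Complex.I * q₂) w‖) l (nhds 0) := by
      have := (continuous_norm.tendsto 0).comp hsub
      simpa [Function.comp_def] using this
    simpa using h1.mul_const (‖ρ w‖)
  have := MeasureTheory.tendsto_integral_filter_of_dominated_convergence
    (μ := μ) (l := l)
    (F := fun (p : ℂ × ℂ) (w : H) => ‖psi B₁ B₂ a p.1 p.2 w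
      - psi B₁ B₂ a (-Complex.I * q₁) (-Complex.I * q₂) w‖ * ‖ρ w‖)
    (f := fun _ : H => (0:ℝ))
    (fun w => 2 * (kfun B₁ B₂ a q₀ w * ‖ρ w‖))
    hmeas hbound (hk.const_mul 2) hlim
  simpa using this
end

section
/- Let H be a separable real Hilbert space, B₁ and B₂ bounded linear operators on H, a, g₁, g₂ ∈ H, q₀ > 0, μ a finite Borel measure on H, ρ : H → ℂ Borel measurable with ∫_H ‖w‖ · k(q₀; w) · |ρ(w)| dμ(w) < ∞, and φ : H → ℂ Borel measurable with |φ(w)| ≤ 1 for all w. Let U_{q₀} = { λ ∈ ℂ : Re(λ) > 0 and |Im(λ^{−1/2})| < 1/√(2q₀) }, and let q₁, q₂ be real numbers with |q₁| > q₀ and |q₂| > q₀. Define V(λ₁, λ₂) = ∫_H φ(w) · ( i⟨B₁ w, g₁⟩ + i⟨B₂ w, g₂⟩ ) · ψ(λ₁, λ₂; w) · ρ(w) dμ(w). Then: (1) the integrand is μ-integrable for every (λ₁, λ₂) ∈ U_{q₀} × U_{q₀} and also at (−iq₁, −iq₂); (2) for each fixed λ₂ ∈ U_{q₀} the map λ₁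 ↦ V(λ₁, λ₂) is complex differentiable on U_{q₀}, and symmetrically in λ₂; and (3) V(λ₁, λ₂) → V(−iq₁, −iq₂) as (λ₁, λ₂) → (−iq₁, −iq₂) through points with Re(λ₁) > 0 and Re(λ₂) > 0. -/
open MeasureTheory
open scoped RealInnerProductSpace

namespace Stmt16A

section
variable {H : Type*} [NormedAddCommGroup H] [InnerProductSpace ℝ H]

lemma inner_cont (B : H →L[ℝ] H) (a : H) : Continuous fun w => ((⟪B w, a⟫ : ℝ) : ℂ) :=
  Complex.continuous_ofReal.comp (B.continuous.inner continuous_const)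

lemma inner_abs_le (B : H →L[ℝ] H) (a w : H) : |(⟪B w, a⟫ : ℝ)| ≤ ‖B‖ * ‖w‖ * ‖a‖ := by
  calc |(⟪B w, a⟫ : ℝ)| ≤ ‖B w‖ * ‖a‖ := abs_real_inner_le_norm _ _
  _ ≤ (‖B‖ * ‖w‖) * ‖a‖ := by
      have := B.le_opNorm w
      have := norm_nonneg a
      nlinarith [norm_nonneg (B w)]

lemma mul_exp_neg_le (α x : ℝ) (hα : 0 < α) (hx : 0 ≤ x) : x * Real.exp (-(α*x)) ≤ 1/α := by
  have h1 : α * x + 1 ≤ Real.exp (α * x) := Real.add_one_le_exp _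
  have h2 : Real.exp (-(α*x)) * Real.exp (α*x) = 1 := by rw [← Real.exp_add]; simp
  have h3 := Real.exp_pos (-(α*x))
  rw [div_eq_inv_mul, mul_one]
  rw [← mul_le_mul_iff_right₀ hα, mul_inv_cancel₀ (ne_of_gt hα)]
  nlinarith [Real.exp_pos (α*x)]

lemma bound_combine (s₀ cc c0 δ δ₃ u v v₂ : ℝ) (hs₀ : 0 < s₀) (hcc0 : cc < c0)
    (hδ : 0 < δ) (hδ₃ : 0 ≤ δ₃) (hu : 0 ≤ u) (hv : 0 ≤ v) (hv₂ : 0 ≤ v₂) :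
    Real.exp (-(s₀*u) + cc*v + c0*v₂) * (u/(2*δ^2) + δ₃/2 * v)
      ≤ (1/(2*δ^2) * (1/s₀) + δ₃/2 * (1/(c0-cc))) * Real.exp (c0*v + c0*v₂) := by
  have e1 : Real.exp (-(s₀*u) + cc*v + c0*v₂)
      = Real.exp (c0*v + c0*v₂) * (Real.exp (-(s₀*u)) * Real.exp (-((c0-cc)*v))) := by
    rw [← Real.exp_add, ← Real.exp_add]; ring_nf
  have hA := mul_exp_neg_le s₀ u hs₀ hu
  have hB := mul_exp_neg_le (c0-cc) v (by linarith) hv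
  have hexp1 : Real.exp (-(s₀*u)) ≤ 1 := Real.exp_le_one_iff.2 (by nlinarith)
  have hexp2 : Real.exp (-((c0-cc)*v)) ≤ 1 := Real.exp_le_one_iff.2 (by nlinarith)
  have hp1 := Real.exp_pos (-(s₀*u))
  have hp2 := Real.exp_pos (-((c0-cc)*v))
  have hE := Real.exp_pos (c0*v + c0*v₂)
  rw [e1, mul_comm _ (Real.exp (c0*v + c0*v₂)), mul_assoc]
  apply mul_le_mul_of_nonneg_left _ hE.le
  have hd2 : (0:ℝ) < 2*δ^2 := by positivity
  calc Real.exp (-(s₀*u)) * Real.exp (-((c0-cc)*v)) * (u/(2*δ^2) + δ₃/2 * v)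
      = (u * Real.exp (-(s₀*u))) * Real.exp (-((c0-cc)*v)) / (2*δ^2)
        + (v * Real.exp (-((c0-cc)*v))) * Real.exp (-(s₀*u)) * (δ₃/2) := by ring
  _ ≤ (1/s₀) * 1 / (2*δ^2) + (1/(c0-cc)) * 1 * (δ₃/2) := by
      have hcc : (0:ℝ) < c0 - cc := by linarith
      gcongr <;> positivity
  _ = 1/(2*δ^2) * (1/s₀) + δ₃/2 * (1/(c0-cc)) := by ring

lemma re_term_le' (l : ℂ) (hlre : 0 ≤ l.re) (c b : ℝ) :
    (-((c:ℂ) ^ 2) / (2 * l) + Complex.I * l ^ (-(1:ℂ)/2) * (b:ℂ)).re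
      ≤ |(l ^ (-(1:ℂ)/2)).im| * |b| := by
  have h1 : (-((c:ℂ) ^ 2) / (2 * l)).re ≤ 0 := by
    have : (-((c:ℂ) ^ 2) / (2 * l)).re = -(c^2) * (2*l.re) / Complex.normSq (2*l) := by
      simp [Complex.div_re, Complex.normSq_apply, ← Complex.ofReal_pow]
    rw [this]
    apply div_nonpos_of_nonpos_of_nonneg
    · nlinarith [sq_nonneg c]
    · exact Complex.normSq_nonneg _
  have h2 : (Complex.I * l ^ (-(1:ℂ)/2) * (b:ℂ)).re
      = -(l ^ (-(1:ℂ)/2)).im * b := by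
    simp [Complex.mul_re, Complex.mul_im]
  rw [Complex.add_re, h2]
  have : -(l ^ (-(1:ℂ)/2)).im * b ≤ |(l ^ (-(1:ℂ)/2)).im| * |b| := by
    calc -(l ^ (-(1:ℂ)/2)).im * b ≤ |(-(l ^ (-(1:ℂ)/2)).im * b)| := le_abs_self _
    _ = |(l ^ (-(1:ℂ)/2)).im| * |b| := by rw [abs_mul, abs_neg]
  linarith

lemma c0eq (q₀ : ℝ) (hq₀ : 0 < q₀) : (2*q₀) ^ (-(1:ℝ)/2) = 1 / Real.sqrt (2*q₀) := by
  rw [Real.sqrt_eq_rpow, neg_div, Real.rpow_neg (by linarith), one_div]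
  norm_num

lemma abs_psi_le (B₁ B₂ : H →L[ℝ] H) (a : H) (q₀ : ℝ) (hq₀ : 0 < q₀) (l₁ l₂ : ℂ)
    (h₁re : 0 ≤ l₁.re) (h₁im : |(l₁ ^ (-(1:ℂ)/2)).im| ≤ 1 / Real.sqrt (2*q₀))
    (h₂re : 0 ≤ l₂.re) (h₂im : |(l₂ ^ (-(1:ℂ)/2)).im| ≤ 1 / Real.sqrt (2*q₀)) (w : H) :
    ‖psi B₁ B₂ a l₁ l₂ w‖ ≤ kfun B₁ B₂ a q₀ w := by
  rw [psi, Complex.norm_exp, kfun]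
  apply Real.exp_le_exp.2
  rw [Complex.add_re]
  have hc0 : 0 ≤ 1 / Real.sqrt (2*q₀) := by positivity
  have key : ∀ (B : H →L[ℝ] H) (l : ℂ), 0 ≤ l.re →
      |(l ^ (-(1:ℂ)/2)).im| ≤ 1 / Real.sqrt (2*q₀) →
      (-((‖B w‖:ℂ) ^ 2) / (2 * l) + Complex.I * l ^ (-(1:ℂ)/2) * ((⟪B w, a⟫ : ℝ):ℂ)).re
        ≤ (2*q₀) ^ (-(1:ℝ)/2) * ‖B‖ * ‖w‖ * ‖a‖ := by
    intro B l hre him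
    calc _ ≤ |(l ^ (-(1:ℂ)/2)).im| * |(⟪B w, a⟫ : ℝ)| := re_term_le' l hre _ _
    _ ≤ (1 / Real.sqrt (2*q₀)) * (‖B‖ * ‖w‖ * ‖a‖) := by
        apply mul_le_mul him (inner_abs_le B a w) (abs_nonneg _) hc0
    _ = (2*q₀) ^ (-(1:ℝ)/2) * ‖B‖ * ‖w‖ * ‖a‖ := by rw [c0eq q₀ hq₀]; ring
  exact add_le_add (key B₁ l₁ h₁re h₁im) (key B₂ l₂ h₂re h₂im)

lemma psi_continuous (B₁ B₂ : H →L[ℝ] H) (a : H) (l₁ l₂ : ℂ) :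
    Continuous fun w => psi B₁ B₂ a l₁ l₂ w := by
  unfold psi
  apply Complex.continuous_exp.comp
  have h1 : Continuous fun w : H => (‖B₁ w‖ : ℂ) :=
    Complex.continuous_ofReal.comp B₁.continuous.norm
  have h2 : Continuous fun w : H => (‖B₂ w‖ : ℂ) :=
    Complex.continuous_ofReal.comp B₂.continuous.norm
  exact (((h1.pow 2).neg.div_const _).add
      (continuous_const.mul (inner_cont B₁ a))).add
    (((h2.pow 2).neg.div_const _).add (continuous_const.mul (inner_cont B₂ a)))

lemma psi_swap (B₁ B₂ : H →L[ℝ] H) (a : H) (l₁ l₂ : ℂ) (w : H) :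
    psi B₁ B₂ a l₁ l₂ w = psi B₂ B₁ a l₂ l₁ w := by
  rw [psi, psi, add_comm]

lemma kfun_swap (B₁ B₂ : H →L[ℝ] H) (a : H) (q₀ : ℝ) (w : H) :
    kfun B₁ B₂ a q₀ w = kfun B₂ B₁ a q₀ w := by
  rw [kfun, kfun, add_comm]

lemma kfun_pos (B₁ B₂ : H →L[ℝ] H) (a : H) (q₀ : ℝ) (w : H) : 0 < kfun B₁ B₂ a q₀ w :=
  Real.exp_pos _

/-- derivative factor of `psi` in its first λ-slot -/
noncomputable def psiD (B₁ : H →L[ℝ] H) (a : H) (w : H) (z : ℂ) : ℂ :=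
  ((‖B₁ w‖ : ℂ) ^ 2 / 2) * (z^2)⁻¹
    + Complex.I * ((-(1:ℂ)/2) * z ^ (-(1:ℂ)/2 - 1)) * ((⟪B₁ w, a⟫ : ℝ) : ℂ)

lemma psiD_cont (B₁ : H →L[ℝ] H) (a : H) (z : ℂ) : Continuous fun w => psiD B₁ a w z := by
  unfold psiD
  have h1 : Continuous fun w : H => (‖B₁ w‖ : ℂ) :=
    Complex.continuous_ofReal.comp B₁.continuous.norm
  exact (((h1.pow 2).div_const _).mul continuous_const).add (continuous_const.mul (inner_cont B₁ a))

lemma hasDerivAt_psi (B₁ B₂ : H →L[ℝ] H) (a : H) (l₂ : ℂ) (w : H) (z : ℂ) (hz : 0 < z.re) :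
    HasDerivAt (fun z => psi B₁ B₂ a z l₂ w) (psi B₁ B₂ a z l₂ w * psiD B₁ a w z) z := by
  have hz0 : z ≠ 0 := by
    intro h; rw [h] at hz; simp at hz
  have hslit : z ∈ Complex.slitPlane := Complex.mem_slitPlane_iff.2 (Or.inl hz)
  set c : ℂ := (‖B₁ w‖ : ℂ) with hc
  set b : ℂ := ((⟪B₁ w, a⟫ : ℝ) : ℂ) with hb
  have t1 : HasDerivAt (fun z : ℂ => -(c ^ 2) / (2 * z)) ((c ^ 2 / 2) * (z^2)⁻¹) z := by
    have h := (hasDerivAt_inv hz0).const_mul (-(c ^ 2) / 2)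
    have hfun : (fun z : ℂ => -(c ^ 2) / (2 * z)) = fun z => (-(c ^ 2) / 2) * z⁻¹ := by
      funext y
      rw [div_eq_mul_inv, mul_inv, div_eq_mul_inv, mul_assoc]
    rw [hfun]
    rw [show (c ^ 2 / 2) * (z^2)⁻¹ = -(c ^ 2) / 2 * -(z ^ 2)⁻¹ by ring]
    exact h
  have t2 : HasDerivAt (fun z : ℂ => Complex.I * z ^ (-(1:ℂ)/2) * b)
      (Complex.I * ((-(1:ℂ)/2) * z ^ (-(1:ℂ)/2 - 1)) * b) z := by
    exact (((Complex.hasStrictDerivAt_cpow_const hslit).hasDerivAt).const_mul Complex.I).mul_const b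
  have hE := ((t1.add t2).add_const
    (-((‖B₂ w‖ : ℂ) ^ 2) / (2 * l₂) + Complex.I * l₂ ^ (-(1 : ℂ) / 2) * ((⟪B₂ w, a⟫ : ℝ) : ℂ)))
  have := hE.cexp
  simpa [psi, psiD, mul_comm] using this

lemma abs_psi_refined (B₁ B₂ : H →L[ℝ] H) (a : H) (q₀ : ℝ)
    (l₂ : ℂ) (h₂re : 0 ≤ l₂.re) (h₂im : |(l₂ ^ (-(1:ℂ)/2)).im| ≤ 1 / Real.sqrt (2*q₀))
    (hq₀ : 0 < q₀)
    (z : ℂ) (s₀ cc : ℝ) (hcc : 0 ≤ cc)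
    (hz2 : |(z ^ (-(1:ℂ)/2)).im| ≤ cc)
    (hzre : s₀ ≤ (2*z.re) / Complex.normSq (2*z)) (w : H) :
    ‖psi B₁ B₂ a z l₂ w‖
      ≤ Real.exp ((-(s₀ * ‖B₁ w‖^2) + cc * (‖B₁‖ * ‖w‖ * ‖a‖))
          + (1 / Real.sqrt (2*q₀)) * (‖B₂‖ * ‖w‖ * ‖a‖)) := by
  rw [psi, Complex.norm_exp, Real.exp_le_exp, Complex.add_re]
  apply add_le_add
  · rw [Complex.add_re]
    apply add_le_add
    · have hre1 : (-((‖B₁ w‖:ℂ) ^ 2) / (2 * z)).re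
          = -(‖B₁ w‖^2) * (2*z.re) / Complex.normSq (2*z) := by
        simp [Complex.div_re, Complex.normSq_apply, ← Complex.ofReal_pow]
      rw [hre1]
      have hc2 : (0:ℝ) ≤ ‖B₁ w‖^2 := sq_nonneg _
      rw [mul_div_assoc, neg_mul, neg_le_neg_iff, mul_comm s₀ _]
      exact mul_le_mul_of_nonneg_left hzre hc2
    · have h2 : (Complex.I * z ^ (-(1:ℂ)/2) * ((⟪B₁ w, a⟫:ℝ):ℂ)).re
          = -(z ^ (-(1:ℂ)/2)).im * (⟪B₁ w, a⟫:ℝ) := by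
        simp [Complex.mul_re, Complex.mul_im]
      rw [h2]
      calc -(z ^ (-(1:ℂ)/2)).im * (⟪B₁ w, a⟫:ℝ)
          ≤ |(z ^ (-(1:ℂ)/2)).im| * |(⟪B₁ w, a⟫:ℝ)| := by
            calc _ ≤ |(-(z ^ (-(1:ℂ)/2)).im * (⟪B₁ w, a⟫:ℝ))| := le_abs_self _
            _ = _ := by rw [abs_mul, abs_neg]
      _ ≤ cc * (‖B₁‖ * ‖w‖ * ‖a‖) :=
            mul_le_mul hz2 (inner_abs_le B₁ a w) (abs_nonneg _) hcc
  · calc (-((‖B₂ w‖:ℂ) ^ 2) / (2 * l₂)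
          + Complex.I * l₂ ^ (-(1:ℂ)/2) * ((⟪B₂ w, a⟫:ℝ):ℂ)).re
        ≤ |(l₂ ^ (-(1:ℂ)/2)).im| * |(⟪B₂ w, a⟫:ℝ)| := re_term_le' l₂ h₂re _ _
    _ ≤ (1 / Real.sqrt (2*q₀)) * (‖B₂‖ * ‖w‖ * ‖a‖) :=
          mul_le_mul h₂im (inner_abs_le B₂ a w) (abs_nonneg _) (by positivity)

lemma abs_psiD_le (B₁ : H →L[ℝ] H) (a : H) (w : H) (z : ℂ)
    (δ : ℝ) (hδ : 0 < δ) (hzabs : δ ≤ ‖z‖) :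
    ‖psiD B₁ a w z‖
      ≤ ‖B₁ w‖^2/(2*δ^2) + (δ ^ (-(3:ℝ)/2))/2 * (‖B₁‖ * ‖w‖ * ‖a‖) := by
  have haz : 0 < ‖z‖ := lt_of_lt_of_le hδ hzabs
  apply le_trans (norm_add_le _ _)
  apply add_le_add
  · have h1 : ‖((‖B₁ w‖:ℂ) ^ 2 / 2) * (z^2)⁻¹‖
        = (‖B₁ w‖^2/2) * ((‖z‖)^2)⁻¹ := by
      rw [norm_mul, norm_div, norm_pow, norm_inv, norm_pow]
      simp [Complex.norm_real, abs_norm, Complex.norm_two]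
    rw [h1]
    have h2 : ((‖z‖)^2)⁻¹ ≤ (δ^2)⁻¹ := by
      apply inv_anti₀ (by positivity)
      exact pow_le_pow_left₀ hδ.le hzabs 2
    calc (‖B₁ w‖^2/2) * ((‖z‖)^2)⁻¹ ≤ (‖B₁ w‖^2/2) * (δ^2)⁻¹ := by
          apply mul_le_mul_of_nonneg_left h2 (by positivity)
    _ = ‖B₁ w‖^2/(2*δ^2) := by field_simp
  · have hexp : (-(1:ℂ)/2 - 1) = ((-3/2 : ℝ) : ℂ) := by norm_num
    have h3 : ‖Complex.I * ((-(1:ℂ)/2) * z ^ (-(1:ℂ)/2 - 1)) * ((⟪B₁ w, a⟫:ℝ):ℂ)‖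
        = (1/2) * (‖z‖ ^ ((-3/2 : ℝ))) * |(⟪B₁ w, a⟫:ℝ)| := by
      rw [norm_mul, norm_mul, norm_mul, hexp, Complex.norm_cpow_real]
      simp [Complex.norm_real]
    rw [h3]
    have h4 : ‖z‖ ^ ((-3/2 : ℝ)) ≤ δ ^ ((-3/2:ℝ)) :=
      Real.antitoneOn_rpow_Ioi_of_exponent_nonpos (by norm_num)
        (Set.mem_Ioi.2 hδ) (Set.mem_Ioi.2 haz) hzabs
    calc (1/2) * (‖z‖ ^ ((-3/2 : ℝ))) * |(⟪B₁ w, a⟫:ℝ)|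
        ≤ (1/2) * (δ ^ ((-3/2:ℝ))) * (‖B₁‖ * ‖w‖ * ‖a‖) := by
          apply mul_le_mul (by
            apply mul_le_mul_of_nonneg_left h4 (by norm_num))
            (inner_abs_le B₁ a w) (abs_nonneg _) (by positivity)
    _ = (δ ^ (-(3:ℝ)/2))/2 * (‖B₁‖ * ‖w‖ * ‖a‖) := by
          rw [show (-(3:ℝ)/2) = ((-3/2:ℝ)) by norm_num]; ring

lemma im_boundary_pos (q : ℝ) (hq : 0 < q) :
    ((-Complex.I * (q:ℂ)) ^ (-(1:ℂ)/2)).im = 1 / Real.sqrt (2*q) := by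
  have hz : (-Complex.I * (q:ℂ)) ≠ 0 := by
    simp [Complex.ext_iff]
    intro h; exact absurd h (ne_of_gt hq)
  rw [Complex.cpow_def_of_ne_zero hz]
  have harg : Complex.arg (-Complex.I * (q:ℂ)) = -(Real.pi/2) := by
    rw [mul_comm, Complex.arg_real_mul _ hq, Complex.arg_neg_I]
  have habs : ‖-Complex.I * (q:ℂ)‖ = q := by
    simp [abs_of_pos hq]
  rw [Complex.exp_im]
  have h1 : (Complex.log (-Complex.I * (q:ℂ)) * (-(1:ℂ)/2)).re = -Real.log q / 2 := by
    rw [Complex.mul_re, Complex.log_re, Complex.log_im, habs, harg]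
    norm_num; ring
  have h2 : (Complex.log (-Complex.I * (q:ℂ)) * (-(1:ℂ)/2)).im = Real.pi/4 := by
    rw [Complex.mul_im, Complex.log_re, Complex.log_im, habs, harg]
    norm_num; ring
  rw [h1, h2, Real.sin_pi_div_four]
  have h3 : Real.exp (-Real.log q / 2) = 1 / Real.sqrt q := by
    rw [neg_div, Real.exp_neg,
      show Real.log q / 2 = Real.log q * (1/2) by ring,
      ← Real.rpow_def_of_pos hq, Real.sqrt_eq_rpow]
    norm_num
  rw [h3, Real.sqrt_mul (by norm_num)]
  have hs2 : Real.sqrt 2 ≠ 0 := by positivity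
  have hsq : Real.sqrt q ≠ 0 := by positivity
  field_simp
  nlinarith [Real.sq_sqrt (show (0:ℝ) ≤ 2 by norm_num), Real.sqrt_nonneg 2, Real.sqrt_nonneg q]

lemma im_boundary_neg (q : ℝ) (hq : q < 0) :
    ((-Complex.I * (q:ℂ)) ^ (-(1:ℂ)/2)).im = -(1 / Real.sqrt (2*(-q))) := by
  have hq' : 0 < -q := by linarith
  have hz : (-Complex.I * (q:ℂ)) ≠ 0 := by
    simp [Complex.ext_iff]
    intro h; exact absurd h (ne_of_lt hq)
  have heq : -Complex.I * (q:ℂ) = ((-q : ℝ):ℂ) * Complex.I := by push_cast; ring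
  rw [Complex.cpow_def_of_ne_zero hz]
  have harg : Complex.arg (-Complex.I * (q:ℂ)) = Real.pi/2 := by
    rw [heq, Complex.arg_real_mul _ hq', Complex.arg_I]
  have habs : ‖-Complex.I * (q:ℂ)‖ = -q := by
    simp [abs_of_neg hq]
  rw [Complex.exp_im]
  have h1 : (Complex.log (-Complex.I * (q:ℂ)) * (-(1:ℂ)/2)).re = -Real.log (-q) / 2 := by
    rw [Complex.mul_re, Complex.log_re, Complex.log_im, habs, harg]
    norm_num; ring
  have h2 : (Complex.log (-Complex.I * (q:ℂ)) * (-(1:ℂ)/2)).im = -(Real.pi/4) := by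
    rw [Complex.mul_im, Complex.log_re, Complex.log_im, habs, harg]
    norm_num; ring
  rw [h1, h2, Real.sin_neg, Real.sin_pi_div_four]
  have h3 : Real.exp (-Real.log (-q) / 2) = 1 / Real.sqrt (-q) := by
    rw [neg_div, Real.exp_neg,
      show Real.log (-q) / 2 = Real.log (-q) * (1/2) by ring,
      ← Real.rpow_def_of_pos hq', Real.sqrt_eq_rpow]
    norm_num
  rw [h3, Real.sqrt_mul (by norm_num)]
  have hs2 : Real.sqrt 2 ≠ 0 := by positivity
  have hsq : Real.sqrt (-q) ≠ 0 := by positivity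
  field_simp
  nlinarith [Real.sq_sqrt (show (0:ℝ) ≤ 2 by norm_num), Real.sqrt_nonneg 2, Real.sqrt_nonneg (-q)]

lemma abs_im_boundary (q : ℝ) (hq : q ≠ 0) :
    |((-Complex.I * (q:ℂ)) ^ (-(1:ℂ)/2)).im| = 1 / Real.sqrt (2*|q|) := by
  rcases hq.lt_or_gt with h|h
  · rw [im_boundary_neg q h, abs_neg, _root_.abs_of_nonneg (by positivity), _root_.abs_of_neg h]
  · rw [im_boundary_pos q h, _root_.abs_of_nonneg (by positivity), _root_.abs_of_pos h]

lemma boundary_lt (q₀ q : ℝ) (hq₀ : 0 < q₀) (hq : q₀ < |q|) :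
    |((-Complex.I * (q:ℂ)) ^ (-(1:ℂ)/2)).im| < 1 / Real.sqrt (2*q₀) := by
  have hq0 : q ≠ 0 := by intro h; rw [h] at hq; simp at hq; linarith
  rw [abs_im_boundary q hq0]
  apply one_div_lt_one_div_of_lt (by positivity)
  exact Real.sqrt_lt_sqrt (by linarith) (by linarith)

lemma boundary_re (q : ℝ) : (-Complex.I * (q:ℂ)).re = 0 := by simp

lemma boundary_ne (q : ℝ) (hq : q ≠ 0) : (-Complex.I * (q:ℂ)) ≠ 0 := by
  simp [Complex.ext_iff]
  intro h; exact absurd h hq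

end
end Stmt16A

namespace Stmt16A
section
variable {H : Type*} [NormedAddCommGroup H] [InnerProductSpace ℝ H]
  [MeasurableSpace H] [BorelSpace H]

lemma integrand_asm (B₁ B₂ : H →L[ℝ] H) (a g₁ g₂ : H) (μ : MeasureTheory.Measure H)
    (ρ : H → ℂ) (hρ : Measurable ρ) (φ : H → ℂ) (hφm : Measurable φ) (l₁ l₂ : ℂ) :
    MeasureTheory.AEStronglyMeasurable (fun w =>
      φ w * (Complex.I * ((⟪B₁ w, g₁⟫ : ℝ) : ℂ) + Complex.I * ((⟪B₂ w, g₂⟫ : ℝ) : ℂ))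
        * psi B₁ B₂ a l₁ l₂ w * ρ w) μ := by
  refine Measurable.aestronglyMeasurable ?_
  exact ((hφm.mul (((continuous_const.mul (inner_cont B₁ g₁)).add
      (continuous_const.mul (inner_cont B₂ g₂))).measurable)).mul
    (psi_continuous B₁ B₂ a l₁ l₂).measurable).mul hρ

lemma integrand_asm' (B₁ B₂ : H →L[ℝ] H) (a g₁ g₂ : H) (μ : MeasureTheory.Measure H)
    (ρ : H → ℂ) (hρ : Measurable ρ) (φ : H → ℂ) (hφm : Measurable φ) (l₁ l₂ : ℂ) :
    MeasureTheory.AEStronglyMeasurable (fun w =>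
      φ w * (Complex.I * ((⟪B₁ w, g₁⟫ : ℝ) : ℂ) + Complex.I * ((⟪B₂ w, g₂⟫ : ℝ) : ℂ))
        * (psi B₁ B₂ a l₁ l₂ w * psiD B₁ a w l₁) * ρ w) μ := by
  refine Measurable.aestronglyMeasurable ?_
  exact ((hφm.mul (((continuous_const.mul (inner_cont B₁ g₁)).add
      (continuous_const.mul (inner_cont B₂ g₂))).measurable)).mul
    ((psi_continuous B₁ B₂ a l₁ l₂).mul (psiD_cont B₁ a l₁)).measurable).mul hρ

lemma sum_abs_le (B₁ B₂ : H →L[ℝ] H) (g₁ g₂ w : H) :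
    ‖Complex.I * ((⟪B₁ w, g₁⟫ : ℝ) : ℂ) + Complex.I * ((⟪B₂ w, g₂⟫ : ℝ) : ℂ)‖
      ≤ (‖B₁‖ * ‖g₁‖ + ‖B₂‖ * ‖g₂‖) * ‖w‖ := by
  calc ‖Complex.I * ((⟪B₁ w, g₁⟫ : ℝ) : ℂ) + Complex.I * ((⟪B₂ w, g₂⟫ : ℝ) : ℂ)‖
      ≤ ‖Complex.I * ((⟪B₁ w, g₁⟫ : ℝ) : ℂ)‖
        + ‖Complex.I * ((⟪B₂ w, g₂⟫ : ℝ) : ℂ)‖ := norm_add_le _ _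
  _ = |(⟪B₁ w, g₁⟫ : ℝ)| + |(⟪B₂ w, g₂⟫ : ℝ)| := by
      simp [norm_mul, Complex.norm_real]
  _ ≤ ‖B₁‖ * ‖w‖ * ‖g₁‖ + ‖B₂‖ * ‖w‖ * ‖g₂‖ :=
      add_le_add (inner_abs_le B₁ g₁ w) (inner_abs_le B₂ g₂ w)
  _ = (‖B₁‖ * ‖g₁‖ + ‖B₂‖ * ‖g₂‖) * ‖w‖ := by ring

lemma integrand_norm_le (B₁ B₂ : H →L[ℝ] H) (a g₁ g₂ : H) (q₀ : ℝ) (hq₀ : 0 < q₀)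
    (ρ : H → ℂ) (φ : H → ℂ) (hφ : ∀ w, ‖φ w‖ ≤ 1)
    (l₁ l₂ : ℂ)
    (h₁re : 0 ≤ l₁.re) (h₁im : |(l₁ ^ (-(1:ℂ)/2)).im| ≤ 1 / Real.sqrt (2*q₀))
    (h₂re : 0 ≤ l₂.re) (h₂im : |(l₂ ^ (-(1:ℂ)/2)).im| ≤ 1 / Real.sqrt (2*q₀)) (w : H) :
    ‖φ w * (Complex.I * ((⟪B₁ w, g₁⟫ : ℝ) : ℂ) + Complex.I * ((⟪B₂ w, g₂⟫ : ℝ) : ℂ))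
        * psi B₁ B₂ a l₁ l₂ w * ρ w‖
      ≤ (‖B₁‖ * ‖g₁‖ + ‖B₂‖ * ‖g₂‖) * (‖w‖ * kfun B₁ B₂ a q₀ w * ‖ρ w‖) := by
  rw [norm_mul, norm_mul, norm_mul]
  have h1 := hφ w
  have h2 := sum_abs_le B₁ B₂ g₁ g₂ w
  have h3 := abs_psi_le B₁ B₂ a q₀ hq₀ l₁ l₂ h₁re h₁im h₂re h₂im w
  have hkp := (kfun_pos B₁ B₂ a q₀ w).le
  calc ‖φ w‖ * ‖_‖ * ‖psi B₁ B₂ a l₁ l₂ w‖ * ‖ρ w‖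
      ≤ 1 * ((‖B₁‖ * ‖g₁‖ + ‖B₂‖ * ‖g₂‖) * ‖w‖) * kfun B₁ B₂ a q₀ w * ‖ρ w‖ := by
        gcongr
  _ = (‖B₁‖ * ‖g₁‖ + ‖B₂‖ * ‖g₂‖) * (‖w‖ * kfun B₁ B₂ a q₀ w * ‖ρ w‖) := by ring

lemma integrand_integrable (B₁ B₂ : H →L[ℝ] H) (a g₁ g₂ : H) (q₀ : ℝ) (hq₀ : 0 < q₀)
    (μ : MeasureTheory.Measure H)
    (ρ : H → ℂ) (hρ : Measurable ρ)
    (hk : MeasureTheory.Integrable (fun w => ‖w‖ * kfun B₁ B₂ a q₀ w * ‖ρ w‖) μ)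
    (φ : H → ℂ) (hφm : Measurable φ) (hφ : ∀ w, ‖φ w‖ ≤ 1)
    (l₁ l₂ : ℂ)
    (h₁re : 0 ≤ l₁.re) (h₁im : |(l₁ ^ (-(1:ℂ)/2)).im| ≤ 1 / Real.sqrt (2*q₀))
    (h₂re : 0 ≤ l₂.re) (h₂im : |(l₂ ^ (-(1:ℂ)/2)).im| ≤ 1 / Real.sqrt (2*q₀)) :
    MeasureTheory.Integrable (fun w =>
      φ w * (Complex.I * ((⟪B₁ w, g₁⟫ : ℝ) : ℂ) + Complex.I * ((⟪B₂ w, g₂⟫ : ℝ) : ℂ))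
        * psi B₁ B₂ a l₁ l₂ w * ρ w) μ := by
  apply MeasureTheory.Integrable.mono' (hk.const_mul (‖B₁‖ * ‖g₁‖ + ‖B₂‖ * ‖g₂‖))
    (integrand_asm B₁ B₂ a g₁ g₂ μ ρ hρ φ hφm l₁ l₂)
  filter_upwards with w
  exact integrand_norm_le B₁ B₂ a g₁ g₂ q₀ hq₀ ρ φ hφ l₁ l₂ h₁re h₁im h₂re h₂im w

end
end Stmt16A

namespace Stmt16A
section
variable {H : Type*} [NormedAddCommGroup H] [InnerProductSpace ℝ H]
  [MeasurableSpace H] [BorelSpace H]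

open MeasureTheory in
lemma diff_aux (B₁ B₂ : H →L[ℝ] H) (a g₁ g₂ : H) (q₀ : ℝ) (hq₀ : 0 < q₀)
    (μ : Measure H) [IsFiniteMeasure μ]
    (ρ : H → ℂ) (hρ : Measurable ρ)
    (hk : Integrable (fun w => ‖w‖ * kfun B₁ B₂ a q₀ w * ‖ρ w‖) μ)
    (φ : H → ℂ) (hφm : Measurable φ) (hφ : ∀ w, ‖φ w‖ ≤ 1)
    (l₂ : ℂ) (h₂re : 0 ≤ l₂.re) (h₂im : |(l₂ ^ (-(1:ℂ)/2)).im| ≤ 1 / Real.sqrt (2*q₀))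
    (l₁ : ℂ) (h₁re : 0 < l₁.re) (h₁im : |(l₁ ^ (-(1:ℂ)/2)).im| < 1 / Real.sqrt (2*q₀)) :
    DifferentiableAt ℂ (fun z => ∫ w,
      φ w * (Complex.I * ((⟪B₁ w, g₁⟫ : ℝ):ℂ) + Complex.I * ((⟪B₂ w, g₂⟫ : ℝ):ℂ))
        * psi B₁ B₂ a z l₂ w * ρ w ∂μ) l₁ := by
  have hl₁0 : l₁ ≠ 0 := by intro h; rw [h] at h₁re; simp at h₁re
  have habs : 0 < ‖l₁‖ := norm_pos_iff.mpr hl₁0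
  set c0 : ℝ := 1 / Real.sqrt (2*q₀) with hc0def
  have hc0 : 0 < c0 := by rw [hc0def]; positivity
  set cc : ℝ := (|(l₁ ^ (-(1:ℂ)/2)).im| + c0)/2 with hccdef
  have hcc1 : |(l₁ ^ (-(1:ℂ)/2)).im| < cc := by rw [hccdef]; linarith
  have hcc2 : cc < c0 := by rw [hccdef]; linarith
  have hccnn : 0 ≤ cc := le_trans (abs_nonneg _) hcc1.le
  have hcpow : ContinuousAt (fun z : ℂ => z ^ (-(1:ℂ)/2)) l₁ :=
    continuousAt_cpow_const (Complex.mem_slitPlane_iff.2 (Or.inl h₁re))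
  have him : ContinuousAt (fun z : ℂ => |(z ^ (-(1:ℂ)/2)).im|) l₁ :=
    (Complex.continuous_im.continuousAt.comp hcpow).abs
  have h2ev : ∀ᶠ z in nhds l₁, |(z ^ (-(1:ℂ)/2)).im| < cc := him.eventually_lt_const hcc1
  have h1ev : ∀ᶠ z in nhds l₁, l₁.re/2 < z.re :=
    Complex.continuous_re.continuousAt.eventually_const_lt (by linarith)
  have h3ev : ∀ᶠ z in nhds l₁, ‖z‖ < ‖l₁‖ + 1 :=
    continuous_norm.continuousAt.eventually_lt_const (by linarith)
  have h4ev : ∀ᶠ z in nhds l₁, ‖l₁‖/2 < ‖z‖ :=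
    continuous_norm.continuousAt.eventually_const_lt (by linarith)
  obtain ⟨ε, εpos, hε⟩ := Metric.eventually_nhds_iff.1 ((h1ev.and h2ev).and (h3ev.and h4ev))
  set R : ℝ := ‖l₁‖ + 1 with hRdef
  have hR : 0 < R := by rw [hRdef]; positivity
  set δ : ℝ := ‖l₁‖ / 2 with hδdef
  have hδ : 0 < δ := by rw [hδdef]; positivity
  set s₀ : ℝ := l₁.re / (4 * R^2) with hs₀def
  have hs₀ : 0 < s₀ := by rw [hs₀def]; positivity
  set δ₃ : ℝ := δ ^ (-(3:ℝ)/2) with hδ₃def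
  have hδ₃ : 0 ≤ δ₃ := by rw [hδ₃def]; positivity
  set M : ℝ := 1/(2*δ^2) * (1/s₀) + δ₃/2 * (1/(c0-cc)) with hMdef
  set Cg : ℝ := ‖B₁‖ * ‖g₁‖ + ‖B₂‖ * ‖g₂‖ with hCgdef
  have hCg : 0 ≤ Cg := by rw [hCgdef]; positivity
  have hball : ∀ z ∈ Metric.ball l₁ ε, (l₁.re/2 < z.re ∧ |(z ^ (-(1:ℂ)/2)).im| < cc)
      ∧ (‖z‖ < R ∧ δ < ‖z‖) := fun z hz => hε (Metric.mem_ball.1 hz)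
  have key := hasDerivAt_integral_of_dominated_loc_of_deriv_le (μ := μ) (𝕜 := ℂ)
    (F := fun z w => φ w * (Complex.I * ((⟪B₁ w, g₁⟫ : ℝ):ℂ) + Complex.I * ((⟪B₂ w, g₂⟫ : ℝ):ℂ))
        * psi B₁ B₂ a z l₂ w * ρ w)
    (F' := fun z w => φ w * (Complex.I * ((⟪B₁ w, g₁⟫ : ℝ):ℂ) + Complex.I * ((⟪B₂ w, g₂⟫ : ℝ):ℂ))
        * (psi B₁ B₂ a z l₂ w * psiD B₁ a w z) * ρ w)
    (bound := fun w => (Cg * M) * (‖w‖ * kfun B₁ B₂ a q₀ w * ‖ρ w‖))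
    (x₀ := l₁) (Metric.ball_mem_nhds l₁ εpos)
    (Filter.Eventually.of_forall fun z => integrand_asm B₁ B₂ a g₁ g₂ μ ρ hρ φ hφm z l₂)
    (integrand_integrable B₁ B₂ a g₁ g₂ q₀ hq₀ μ ρ hρ hk φ hφm hφ l₁ l₂ h₁re.le h₁im.le h₂re h₂im)
    (integrand_asm' B₁ B₂ a g₁ g₂ μ ρ hρ φ hφm l₁ l₂)
    ?_ (hk.const_mul (Cg * M)) ?_
  · exact key.2.differentiableAt
  · -- bound
    filter_upwards with w
    intro z hz
    obtain ⟨⟨hz1, hz2⟩, hz3, hz4⟩ := hball z hz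
    have hzre : 0 < z.re := by linarith
    have hz0 : z ≠ 0 := by intro h; rw [h] at hzre; simp at hzre
    have hazpos : 0 < ‖z‖ := lt_trans hδ hz4
    -- s₀ bound on Re(1/(2z)) numerator form
    have hnormSq : Complex.normSq (2*z) = (2*‖z‖)^2 := by
      rw [Complex.normSq_eq_norm_sq, norm_mul, Complex.norm_two]
    have hzre2 : s₀ ≤ (2*z.re) / Complex.normSq (2*z) := by
      rw [hnormSq, hs₀def]
      apply div_le_div₀ (by linarith) (by linarith) (by positivity) (by nlinarith)
    have hA := abs_psi_refined B₁ B₂ a q₀ l₂ h₂re h₂im hq₀ z s₀ cc hccnn hz2.le hzre2 w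
    have hB := abs_psiD_le B₁ a w z δ hδ hz4.le
    have hC := bound_combine s₀ cc c0 δ δ₃ (‖B₁ w‖^2) (‖B₁‖*‖w‖*‖a‖) (‖B₂‖*‖w‖*‖a‖)
      hs₀ hcc2 hδ hδ₃ (by positivity) (by positivity) (by positivity)
    have hkeq : kfun B₁ B₂ a q₀ w
        = Real.exp (c0 * (‖B₁‖*‖w‖*‖a‖) + c0 * (‖B₂‖*‖w‖*‖a‖)) := by
      rw [kfun, c0eq q₀ hq₀, ← hc0def]
      congr 1; ring
    have hψD : ‖psi B₁ B₂ a z l₂ w‖ * ‖psiD B₁ a w z‖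
        ≤ M * kfun B₁ B₂ a q₀ w := by
      calc ‖psi B₁ B₂ a z l₂ w‖ * ‖psiD B₁ a w z‖
          ≤ Real.exp ((-(s₀ * ‖B₁ w‖^2) + cc * (‖B₁‖ * ‖w‖ * ‖a‖))
              + (1 / Real.sqrt (2*q₀)) * (‖B₂‖ * ‖w‖ * ‖a‖))
            * (‖B₁ w‖^2/(2*δ^2) + (δ ^ (-(3:ℝ)/2))/2 * (‖B₁‖ * ‖w‖ * ‖a‖)) :=
            mul_le_mul hA hB (norm_nonneg _) (Real.exp_pos _).le
      _ = Real.exp (-(s₀ * ‖B₁ w‖^2) + cc * (‖B₁‖*‖w‖*‖a‖) + c0 * (‖B₂‖*‖w‖*‖a‖))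
            * (‖B₁ w‖^2/(2*δ^2) + δ₃/2 * (‖B₁‖*‖w‖*‖a‖)) := by rw [← hc0def, ← hδ₃def]
      _ ≤ (1/(2*δ^2) * (1/s₀) + δ₃/2 * (1/(c0-cc)))
            * Real.exp (c0 * (‖B₁‖*‖w‖*‖a‖) + c0 * (‖B₂‖*‖w‖*‖a‖)) := hC
      _ = M * kfun B₁ B₂ a q₀ w := by rw [hkeq, ← hMdef]
    calc ‖φ w * (Complex.I * ((⟪B₁ w, g₁⟫ : ℝ):ℂ) + Complex.I * ((⟪B₂ w, g₂⟫ : ℝ):ℂ))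
            * (psi B₁ B₂ a z l₂ w * psiD B₁ a w z) * ρ w‖
        = (‖φ w‖
            * ‖Complex.I * ((⟪B₁ w, g₁⟫ : ℝ):ℂ) + Complex.I * ((⟪B₂ w, g₂⟫ : ℝ):ℂ)‖)
          * (‖psi B₁ B₂ a z l₂ w‖ * ‖psiD B₁ a w z‖)
          * ‖ρ w‖ := by
          rw [norm_mul, norm_mul, norm_mul, norm_mul]
    _ ≤ (1 * (Cg * ‖w‖)) * (M * kfun B₁ B₂ a q₀ w) * ‖ρ w‖ := by
        apply mul_le_mul_of_nonneg_right _ (norm_nonneg _)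
        apply mul_le_mul _ hψD (by positivity) (by positivity)
        exact mul_le_mul (hφ w) (sum_abs_le B₁ B₂ g₁ g₂ w) (norm_nonneg _) one_pos.le
    _ = (Cg * M) * (‖w‖ * kfun B₁ B₂ a q₀ w * ‖ρ w‖) := by ring
  · -- differentiability
    filter_upwards with w
    intro z hz
    obtain ⟨⟨hz1, _⟩, _, _⟩ := hball z hz
    have hzre : 0 < z.re := by linarith
    exact ((hasDerivAt_psi B₁ B₂ a l₂ w z hzre).const_mul
      (φ w * (Complex.I * ((⟪B₁ w, g₁⟫ : ℝ):ℂ) + Complex.I * ((⟪B₂ w, g₂⟫ : ℝ):ℂ)))).mul_const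
      (ρ w)

end
end Stmt16A

namespace Stmt16A
section
variable {H : Type*} [NormedAddCommGroup H] [InnerProductSpace ℝ H]

lemma psi_contAt (B₁ B₂ : H →L[ℝ] H) (a : H) (w : H) (p₀ : ℂ × ℂ)
    (h1 : p₀.1 ∈ Complex.slitPlane) (h10 : p₀.1 ≠ 0)
    (h2 : p₀.2 ∈ Complex.slitPlane) (h20 : p₀.2 ≠ 0) :
    ContinuousAt (fun p : ℂ × ℂ => psi B₁ B₂ a p.1 p.2 w) p₀ := by
  unfold psi
  apply Complex.continuous_exp.continuousAt.comp
  apply ContinuousAt.add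
  · apply ContinuousAt.add
    · exact continuousAt_const.div
        ((continuous_const.mul continuous_fst).continuousAt) (by simpa using h10)
    · exact (continuousAt_const.mul
        ((continuousAt_cpow_const h1).comp continuous_fst.continuousAt)).mul continuousAt_const
  · apply ContinuousAt.add
    · exact continuousAt_const.div
        ((continuous_const.mul continuous_snd).continuousAt) (by simpa using h20)
    · exact (continuousAt_const.mul
        ((continuousAt_cpow_const h2).comp continuous_snd.continuousAt)).mul continuousAt_const

end
end Stmt16A

/-- The analytic core of Theorem 5.1 of the paper, for the transform
`V(λ₁, λ₂) = ∫_H φ(w)(i⟨B₁w,g₁⟩ + i⟨B₂w,g₂⟩) ψ(λ₁,λ₂;w) ρ(w) dμ(w)` of the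
first variation: integrability on `U_{q₀} × U_{q₀}` and at `(−iq₁, −iq₂)`,
separate analyticity, and the boundary limit. -/
theorem stmt16 {H : Type*} [NormedAddCommGroup H] [InnerProductSpace ℝ H]
    [TopologicalSpace.SeparableSpace H] [MeasurableSpace H] [BorelSpace H]
    (B₁ B₂ : H →L[ℝ] H) (a g₁ g₂ : H) (q₀ : ℝ) (hq₀ : 0 < q₀)
    (μ : Measure H) [IsFiniteMeasure μ]
    (ρ : H → ℂ) (hρ : Measurable ρ)
    (hk : Integrable (fun w => ‖w‖ * kfun B₁ B₂ a q₀ w * ‖ρ w‖) μ)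
    (φ : H → ℂ) (hφm : Measurable φ) (hφ : ∀ w, ‖φ w‖ ≤ 1)
    (U : Set ℂ)
    (hU : U = {l : ℂ | 0 < l.re ∧ |(l ^ (-(1 : ℂ) / 2)).im| < 1 / Real.sqrt (2 * q₀)})
    (q₁ q₂ : ℝ) (hq₁ : q₀ < |q₁|) (hq₂ : q₀ < |q₂|) :
    (∀ l₁ ∈ U, ∀ l₂ ∈ U,
      Integrable (fun w =>
        φ w * (Complex.I * ((⟪B₁ w, g₁⟫ : ℝ) : ℂ) + Complex.I * ((⟪B₂ w, g₂⟫ : ℝ) : ℂ))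
          * psi B₁ B₂ a l₁ l₂ w * ρ w) μ) ∧
    Integrable (fun w =>
      φ w * (Complex.I * ((⟪B₁ w, g₁⟫ : ℝ) : ℂ) + Complex.I * ((⟪B₂ w, g₂⟫ : ℝ) : ℂ))
        * psi B₁ B₂ a (-Complex.I * q₁) (-Complex.I * q₂) w * ρ w) μ ∧
    (∀ l₂ ∈ U, ∀ l₁ ∈ U,
      DifferentiableAt ℂ
        (fun z => ∫ w,
          φ w * (Complex.I * ((⟪B₁ w, g₁⟫ : ℝ) : ℂ) + Complex.I * ((⟪B₂ w, g₂⟫ : ℝ) : ℂ))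
            * psi B₁ B₂ a z l₂ w * ρ w ∂μ) l₁) ∧
    (∀ l₁ ∈ U, ∀ l₂ ∈ U,
      DifferentiableAt ℂ
        (fun z => ∫ w,
          φ w * (Complex.I * ((⟪B₁ w, g₁⟫ : ℝ) : ℂ) + Complex.I * ((⟪B₂ w, g₂⟫ : ℝ) : ℂ))
            * psi B₁ B₂ a l₁ z w * ρ w ∂μ) l₂) ∧
    Filter.Tendsto
      (fun p : ℂ × ℂ => ∫ w,
        φ w * (Complex.I * ((⟪B₁ w, g₁⟫ : ℝ) : ℂ) + Complex.I * ((⟪B₂ w, g₂⟫ : ℝ) : ℂ))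
          * psi B₁ B₂ a p.1 p.2 w * ρ w ∂μ)
      (nhdsWithin (-Complex.I * q₁, -Complex.I * q₂)
        {p : ℂ × ℂ | 0 < p.1.re ∧ 0 < p.2.re})
      (nhds (∫ w,
        φ w * (Complex.I * ((⟪B₁ w, g₁⟫ : ℝ) : ℂ) + Complex.I * ((⟪B₂ w, g₂⟫ : ℝ) : ℂ))
          * psi B₁ B₂ a (-Complex.I * q₁) (-Complex.I * q₂) w * ρ w ∂μ)) := by
  have hq₁0 : q₁ ≠ 0 := by intro h; rw [h] at hq₁; simp at hq₁; linarith
  have hq₂0 : q₂ ≠ 0 := by intro h; rw [h] at hq₂; simp at hq₂; linarith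
  have hb₁re : (0:ℝ) ≤ (-Complex.I * (q₁:ℂ)).re := by rw [Stmt16A.boundary_re]
  have hb₂re : (0:ℝ) ≤ (-Complex.I * (q₂:ℂ)).re := by rw [Stmt16A.boundary_re]
  have hb₁im := Stmt16A.boundary_lt q₀ q₁ hq₀ hq₁
  have hb₂im := Stmt16A.boundary_lt q₀ q₂ hq₀ hq₂
  have hUmem : ∀ l ∈ U, 0 < l.re ∧ |(l ^ (-(1:ℂ)/2)).im| < 1 / Real.sqrt (2*q₀) := by
    intro l hl; rw [hU] at hl; exact hl
  refine ⟨?_, ?_, ?_, ?_, ?_⟩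
  · intro l₁ hl₁ l₂ hl₂
    obtain ⟨h1, h2⟩ := hUmem l₁ hl₁; obtain ⟨h3, h4⟩ := hUmem l₂ hl₂
    exact Stmt16A.integrand_integrable B₁ B₂ a g₁ g₂ q₀ hq₀ μ ρ hρ hk φ hφm hφ l₁ l₂
      h1.le h2.le h3.le h4.le
  · exact Stmt16A.integrand_integrable B₁ B₂ a g₁ g₂ q₀ hq₀ μ ρ hρ hk φ hφm hφ _ _
      hb₁re hb₁im.le hb₂re hb₂im.le
  · intro l₂ hl₂ l₁ hl₁
    obtain ⟨h1, h2⟩ := hUmem l₂ hl₂; obtain ⟨h3, h4⟩ := hUmem l₁ hl₁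
    exact Stmt16A.diff_aux B₁ B₂ a g₁ g₂ q₀ hq₀ μ ρ hρ hk φ hφm hφ l₂ h1.le h2.le l₁ h3 h4
  · intro l₁ hl₁ l₂ hl₂
    obtain ⟨h1, h2⟩ := hUmem l₁ hl₁; obtain ⟨h3, h4⟩ := hUmem l₂ hl₂
    have hk' : Integrable (fun w => ‖w‖ * kfun B₂ B₁ a q₀ w * ‖ρ w‖) μ := by
      have heqk : (fun w : H => ‖w‖ * kfun B₁ B₂ a q₀ w * ‖ρ w‖)
          = fun w => ‖w‖ * kfun B₂ B₁ a q₀ w * ‖ρ w‖ := by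
        funext w; rw [Stmt16A.kfun_swap]
      rw [← heqk]; exact hk
    have heq : ∀ z : ℂ, (fun w =>
        φ w * (Complex.I * ((⟪B₁ w, g₁⟫ : ℝ):ℂ) + Complex.I * ((⟪B₂ w, g₂⟫ : ℝ):ℂ))
          * psi B₁ B₂ a l₁ z w * ρ w)
        = fun w => φ w * (Complex.I * ((⟪B₂ w, g₂⟫ : ℝ):ℂ) + Complex.I * ((⟪B₁ w, g₁⟫ : ℝ):ℂ))
          * psi B₂ B₁ a z l₁ w * ρ w := by
      intro z; funext w
      rw [Stmt16A.psi_swap B₁ B₂ a l₁ z w, add_comm (Complex.I * ((⟪B₁ w, g₁⟫ : ℝ):ℂ))]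
    simp only [heq]
    exact Stmt16A.diff_aux B₂ B₁ a g₂ g₁ q₀ hq₀ μ ρ hρ hk' φ hφm hφ l₁ h1.le h2.le l₂ h3 h4
  · set p₀ : ℂ × ℂ := (-Complex.I * (q₁:ℂ), -Complex.I * (q₂:ℂ)) with hp₀
    have hslit1 : (-Complex.I * (q₁:ℂ)) ∈ Complex.slitPlane :=
      Complex.mem_slitPlane_iff.2 (Or.inr (by simp [hq₁0]))
    have hslit2 : (-Complex.I * (q₂:ℂ)) ∈ Complex.slitPlane :=
      Complex.mem_slitPlane_iff.2 (Or.inr (by simp [hq₂0]))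
    have hg1 : ContinuousAt (fun z : ℂ => |(z ^ (-(1:ℂ)/2)).im|) (-Complex.I * (q₁:ℂ)) :=
      (Complex.continuous_im.continuousAt.comp (continuousAt_cpow_const hslit1)).abs
    have hg2 : ContinuousAt (fun z : ℂ => |(z ^ (-(1:ℂ)/2)).im|) (-Complex.I * (q₂:ℂ)) :=
      (Complex.continuous_im.continuousAt.comp (continuousAt_cpow_const hslit2)).abs
    have ev1 : ∀ᶠ p : ℂ × ℂ in nhds p₀, |(p.1 ^ (-(1:ℂ)/2)).im| < 1 / Real.sqrt (2*q₀) :=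
      (hg1.comp (f := Prod.fst) (x := p₀) continuous_fst.continuousAt).eventually_lt_const hb₁im
    have ev2 : ∀ᶠ p : ℂ × ℂ in nhds p₀, |(p.2 ^ (-(1:ℂ)/2)).im| < 1 / Real.sqrt (2*q₀) :=
      (hg2.comp (f := Prod.snd) (x := p₀) continuous_snd.continuousAt).eventually_lt_const hb₂im
    apply MeasureTheory.tendsto_integral_filter_of_dominated_convergence
      (bound := fun w => (‖B₁‖ * ‖g₁‖ + ‖B₂‖ * ‖g₂‖)
        * (‖w‖ * kfun B₁ B₂ a q₀ w * ‖ρ w‖))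
    · exact Filter.Eventually.of_forall fun p =>
        Stmt16A.integrand_asm B₁ B₂ a g₁ g₂ μ ρ hρ φ hφm p.1 p.2
    · filter_upwards [eventually_mem_nhdsWithin,
        (ev1.and ev2).filter_mono nhdsWithin_le_nhds] with p hpS hpim
      exact Filter.Eventually.of_forall fun w =>
        Stmt16A.integrand_norm_le B₁ B₂ a g₁ g₂ q₀ hq₀ ρ φ hφ p.1 p.2
          hpS.1.le hpim.1.le hpS.2.le hpim.2.le w
    · exact hk.const_mul _
    · apply Filter.Eventually.of_forall
      intro w
      have hpsi := Stmt16A.psi_contAt B₁ B₂ a w p₀ hslit1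
        (Stmt16A.boundary_ne q₁ hq₁0) hslit2 (Stmt16A.boundary_ne q₂ hq₂0)
      have hc : ContinuousAt (fun p : ℂ × ℂ =>
          φ w * (Complex.I * ((⟪B₁ w, g₁⟫ : ℝ):ℂ) + Complex.I * ((⟪B₂ w, g₂⟫ : ℝ):ℂ))
            * psi B₁ B₂ a p.1 p.2 w * ρ w) p₀ :=
        (continuousAt_const.mul hpsi).mul continuousAt_const
      exact hc.tendsto.mono_left nhdsWithin_le_nhds
end
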